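/- arXiv:2306.16812 — 10 statements merged into one kernel-verified Lean document; each statement's English description precedes it below -/
import Mathlib

section
/- If H is an n×n matrix with entries ±1 and n > 2 rows that are pairwise orthogonal, then n is divisible by 4. -/
theorem hadamard_order_div_four (n : ℕ) (H : Matrix (Fin n) (Fin n) ℝ)
    (hpm : ∀ i j, H i j = 1 ∨ H i j = -1)
    (horth : ∀ i j : Fin n, i ≠ j → ∑ k, H i k * H j k = 0)
    (hn : 2 < n) :
    4 ∣ n := by
  have h0 : (0:ℕ) < n := by omega
  have h1 : (1:ℕ) < n := by omega
  set i0 : Fin n := ⟨0, h0⟩ with hi0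
  set i1 : Fin n := ⟨1, h1⟩ with hi1
  set i2 : Fin n := ⟨2, hn⟩ with hi2
  set s : Fin n → ℝ := fun k => H i0 k * H i1 k with hs_def
  set t : Fin n → ℝ := fun k => H i0 k * H i2 k with ht_def
  have hs : ∀ k, s k = 1 ∨ s k = -1 := by
    intro k
    rcases hpm i0 k with h | h <;> rcases hpm i1 k with h' | h' <;>
      simp [hs_def, h, h']
  have ht : ∀ k, t k = 1 ∨ t k = -1 := by
    intro k
    rcases hpm i0 k with h | h <;> rcases hpm i2 k with h' | h' <;>
      simp [ht_def, h, h']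
  have hst : ∀ k, s k * t k = H i1 k * H i2 k := by
    intro k
    have hsq : H i0 k * H i0 k = 1 := by
      rcases hpm i0 k with h | h <;> simp [h]
    simp only [hs_def, ht_def]
    calc (H i0 k * H i1 k) * (H i0 k * H i2 k)
        = (H i0 k * H i0 k) * (H i1 k * H i2 k) := by ring
      _ = H i1 k * H i2 k := by rw [hsq, one_mul]
  have hsum : ∑ k, (1 + s k) * (1 + t k) = (n : ℝ) := by
    have e : ∀ k : Fin n, (1 + s k) * (1 + t k) = 1 + s k + t k + s k * t k := by
      intro k; ring
    rw [Finset.sum_congr rfl (fun k _ => e k)]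
    rw [Finset.sum_add_distrib, Finset.sum_add_distrib, Finset.sum_add_distrib]
    have h01 : ∑ k, s k = 0 := horth i0 i1 (by simp [hi0, hi1, Fin.ext_iff])
    have h02 : ∑ k, t k = 0 := horth i0 i2 (by simp [hi0, hi2, Fin.ext_iff])
    have h12 : ∑ k, s k * t k = 0 := by
      rw [Finset.sum_congr rfl (fun k _ => hst k)]
      exact horth i1 i2 (by simp [hi1, hi2, Fin.ext_iff])
    simp [h01, h02, h12]
  have hsum2 : ∑ k, (1 + s k) * (1 + t k)
      = 4 * ((Finset.univ.filter (fun k => s k = 1 ∧ t k = 1)).card : ℝ) := by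
    have e : ∀ k : Fin n, (1 + s k) * (1 + t k)
        = 4 * (if s k = 1 ∧ t k = 1 then (1:ℝ) else 0) := by
      intro k
      rcases hs k with h | h <;> rcases ht k with h' | h' <;>
        simp [h, h'] <;> norm_num
    rw [Finset.sum_congr rfl (fun k _ => e k), ← Finset.mul_sum, Finset.sum_boole]
  have key : (n : ℝ) = 4 * ((Finset.univ.filter (fun k => s k = 1 ∧ t k = 1)).card : ℝ) := by
    rw [← hsum, hsum2]
  have : n = 4 * (Finset.univ.filter (fun k => s k = 1 ∧ t k = 1)).card := by
    exact_mod_cast key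
  exact ⟨_, this⟩
end

section
/- Let q ≡ 3 (mod 4) be a prime power. Then there exists a skew Hadamard matrix of order q + 1 (Paley's first construction). -/
open Finset Matrix

section aux

variable {F : Type*} [Field F] [Fintype F] [DecidableEq F]

lemma jacobsthal_sum (hF : ringChar F ≠ 2) {b : F} (hb : b ≠ 0) :
    ∑ x : F, quadraticChar F x * quadraticChar F (x + b) = -1 := by
  classical
  have h0 : ∑ x : F, quadraticChar F x * quadraticChar F (x + b)
      = ∑ x ∈ univ.erase (0 : F), quadraticChar F x * quadraticChar F (x + b) := by
    rw [Finset.sum_erase]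
    simp
  have h1 : ∀ x ∈ univ.erase (0 : F),
      quadraticChar F x * quadraticChar F (x + b)
        = quadraticChar F (1 + b * x⁻¹) := by
    intro x hx
    have hx0 : x ≠ 0 := Finset.ne_of_mem_erase hx
    have : x * (x + b) = x ^ 2 * (1 + b * x⁻¹) := by field_simp
    rw [← _root_.map_mul, this, _root_.map_mul, quadraticChar_sq_one' hx0, one_mul]
  rw [h0, Finset.sum_congr rfl h1]
  have h2 : ∑ x ∈ univ.erase (0 : F), quadraticChar F (1 + b * x⁻¹)
      = ∑ u ∈ univ.erase (1 : F), quadraticChar F u := by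
    apply Finset.sum_nbij' (fun x => 1 + b * x⁻¹) (fun u => b * (u - 1)⁻¹)
    · intro x hx
      have hx0 : x ≠ 0 := Finset.ne_of_mem_erase hx
      simp only [Finset.mem_erase, Finset.mem_univ, and_true]
      intro h
      have : b * x⁻¹ = 0 := by linear_combination h
      simp [hx0, hb] at this
    · intro u hu
      have hu1 : u ≠ 1 := Finset.ne_of_mem_erase hu
      simp only [Finset.mem_erase, Finset.mem_univ, and_true]
      intro h
      have : u - 1 ≠ 0 := sub_ne_zero.mpr hu1
      simp [hb, this] at h
    · intro x hx
      have hx0 : x ≠ 0 := Finset.ne_of_mem_erase hx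
      field_simp
      have : x + b - x = b := by ring
      rw [this, div_self hb]
    · intro u hu
      have hu1 : u - 1 ≠ 0 := sub_ne_zero.mpr (Finset.ne_of_mem_erase hu)
      field_simp
      ring
    · intro x hx; rfl
  rw [h2, Finset.sum_erase_eq_sub (Finset.mem_univ (1 : F)),
    quadraticChar_sum_zero hF]
  simp

end aux

theorem paley_I (q : ℕ) (hq : ∃ p k : ℕ, p.Prime ∧ 0 < k ∧ q = p ^ k)
    (h4 : q % 4 = 3) :
    ∃ H : Matrix (Fin (q + 1)) (Fin (q + 1)) ℝ,
      (∀ i j, H i j = 1 ∨ H i j = -1) ∧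
      H * H.transpose = ((q + 1 : ℕ) : ℝ) • (1 : Matrix (Fin (q + 1)) (Fin (q + 1)) ℝ) ∧
      H + H.transpose = (2 : ℝ) • (1 : Matrix (Fin (q + 1)) (Fin (q + 1)) ℝ) := by
  classical
  obtain ⟨p, k, hp, hk, hqe⟩ := hq
  haveI : Fact p.Prime := ⟨hp⟩
  set F := GaloisField p k with hFdef
  letI : Fintype F := Fintype.ofFinite F
  letI : DecidableEq F := Classical.decEq F
  have hcard : Fintype.card F = q := by
    rw [← Nat.card_eq_fintype_card, hFdef, GaloisField.card p k hk.ne', hqe]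
  have hcard4 : Fintype.card F % 4 = 3 := by rw [hcard]; exact h4
  have hchar2 : ringChar F ≠ 2 := by
    intro h
    have := FiniteField.even_card_of_char_two h
    omega
  -- the real-valued quadratic character
  set rχ : F → ℝ := fun x => ((quadraticChar F x : ℤ) : ℝ) with hrχ
  have hrχ0 : rχ 0 = 0 := by simp [hrχ]
  have hneg1 : quadraticChar F (-1) = -1 := by
    rw [quadraticChar_neg_one_iff_not_isSquare]
    rw [FiniteField.isSquare_neg_one_iff]
    simp [hcard4]
  have hrneg : ∀ x : F, rχ (-x) = - rχ x := by
    intro x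
    have h2 : quadraticChar F (-x) = - quadraticChar F x := by
      rw [show (-x : F) = -1 * x by ring, _root_.map_mul, hneg1]; ring
    simp only [hrχ, h2, Int.cast_neg]
  have hrsq : ∀ x : F, x ≠ 0 → rχ x * rχ x = 1 := by
    intro x hx
    have := quadraticChar_sq_one (F := F) hx
    have : (quadraticChar F x : ℤ) * (quadraticChar F x : ℤ) = 1 := by
      rw [← sq]; exact_mod_cast this
    simp only [hrχ]
    exact_mod_cast this
  have hrdich : ∀ x : F, x ≠ 0 → rχ x = 1 ∨ rχ x = -1 := by
    intro x hx
    rcases quadraticChar_dichotomy (F := F) hx with h | h <;>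
      [left; right] <;> simp only [hrχ, h] <;> norm_num
  -- the Paley matrix on Option F
  set M : Matrix (Option F) (Option F) ℝ := fun i j =>
    match i, j with
    | none, none => 1
    | none, some _ => 1
    | some _, none => -1
    | some a, some b => if a = b then 1 else rχ (b - a)
    with hM
  -- sum of rχ over F is 0
  have hsum0 : ∑ x : F, rχ x = 0 := by
    have := quadraticChar_sum_zero hchar2
    simp only [hrχ]
    exact_mod_cast this
  -- Jacobsthal in ℝ
  have hjac : ∀ b : F, b ≠ 0 → ∑ x : F, rχ x * rχ (x + b) = -1 := by
    intro b hb
    have := jacobsthal_sum hchar2 hb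
    have : ((∑ x : F, quadraticChar F x * quadraticChar F (x + b) : ℤ) : ℝ) = -1 := by
      rw [this]; norm_num
    rw [← this]
    push_cast [hrχ]
    rfl
  -- key matrix identities over Option F
  have hMskew : M + M.transpose = (2 : ℝ) • (1 : Matrix (Option F) (Option F) ℝ) := by
    ext i j
    rw [Matrix.add_apply, Matrix.transpose_apply]
    rcases i with _ | a <;> rcases j with _ | b <;>
      simp only [Matrix.add_apply, Matrix.transpose_apply, Matrix.smul_apply,
        Matrix.one_apply, hM, smul_eq_mul]
    · simp
      try norm_num
    · simp
      try norm_num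
    · simp
      try norm_num
    · by_cases hab : a = b
      · subst hab
        simp only [eq_self_iff_true, if_true]
        norm_num
      · have hba : ¬ b = a := fun h => hab h.symm
        simp only [hab, hba, if_false, if_neg (by simpa using hab)]
        have : (a - b : F) = -(b - a) := by ring
        rw [this, hrneg]
        simp [Option.some.injEq, hab]
  have hMorth : M * M.transpose
      = ((q + 1 : ℕ) : ℝ) • (1 : Matrix (Option F) (Option F) ℝ) := by
    ext i j
    rw [Matrix.mul_apply]
    simp only [Matrix.transpose_apply, Matrix.smul_apply, Matrix.one_apply, smul_eq_mul]
    rcases i with _ | a <;> rcases j with _ | b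
    · -- none none
      rw [Fintype.sum_option]
      simp only [hM, mul_one]
      rw [Finset.sum_const, Finset.card_univ, hcard, nsmul_eq_mul]
      simp only [eq_self_iff_true, if_true]
      push_cast
      ring
    · -- none, some b
      rw [Fintype.sum_option]
      simp only [hM]
      have : ∀ a : F, (1 : ℝ) * (if b = a then 1 else rχ (a - b))
          = rχ (a - b) + (if b = a then 1 else 0) := by
        intro a
        by_cases h : b = a
        · subst h; simp [hrχ0]
        · simp [h]
      rw [Finset.sum_congr rfl fun a _ => this a]
      rw [Finset.sum_add_distrib, Finset.sum_ite_eq]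
      have : ∑ a : F, rχ (a - b) = ∑ x : F, rχ x :=
        Fintype.sum_equiv (Equiv.subRight b) _ _ (fun a => rfl)
      rw [this, hsum0]
      simp
    · -- some a, none
      rw [Fintype.sum_option]
      simp only [hM]
      have : ∀ c : F, (if a = c then (1:ℝ) else rχ (c - a)) * 1
          = rχ (c - a) + (if a = c then 1 else 0) := by
        intro c
        by_cases h : a = c
        · subst h; simp [hrχ0]
        · simp [h]
      rw [Finset.sum_congr rfl fun c _ => this c]
      rw [Finset.sum_add_distrib, Finset.sum_ite_eq]
      have : ∑ c : F, rχ (c - a) = ∑ x : F, rχ x :=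
        Fintype.sum_equiv (Equiv.subRight a) _ _ (fun c => rfl)
      rw [this, hsum0]
      simp
    · -- some a, some b
      rw [Fintype.sum_option]
      simp only [hM]
      by_cases hab : a = b
      · subst hab
        have : ∀ c : F, (if a = c then (1:ℝ) else rχ (c - a)) *
            (if a = c then (1:ℝ) else rχ (c - a)) = 1 := by
          intro c
          by_cases h : a = c
          · simp [h]
          · simp only [h, if_false]
            exact hrsq _ (sub_ne_zero.mpr fun hc => h hc.symm)
        rw [Finset.sum_congr rfl fun c _ => this c]
        rw [Finset.sum_const, Finset.card_univ, hcard, nsmul_eq_mul]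
        simp only [eq_self_iff_true, if_true]
        push_cast
        ring
      · have hba : b - a ≠ 0 := sub_ne_zero.mpr fun h => hab h.symm
        have key : ∀ c : F, (if a = c then (1:ℝ) else rχ (c - a)) *
            (if b = c then (1:ℝ) else rχ (c - b))
            = rχ (c - a) * rχ (c - b) + (if a = c then rχ (a - b) else 0)
              + (if b = c then rχ (b - a) else 0) := by
          intro c
          by_cases h1 : a = c
          · subst h1
            have h2 : ¬ b = a := fun h => hab h.symm
            simp [h2, hrχ0]
          · by_cases h2 : b = c
            · subst h2
              simp [h1, hrχ0]
            · simp [h1, h2]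
        rw [Finset.sum_congr rfl fun c _ => key c]
        rw [Finset.sum_add_distrib, Finset.sum_add_distrib,
          Finset.sum_ite_eq, Finset.sum_ite_eq]
        have hre : ∑ c : F, rχ (c - a) * rχ (c - b)
            = ∑ x : F, rχ x * rχ (x + (a - b)) := by
          apply Fintype.sum_equiv (Equiv.subRight a)
          intro c
          have : c - a + (a - b) = c - b := by ring
          simp [Equiv.subRight, this]
        rw [hre, hjac _ (sub_ne_zero.mpr hab)]
        have : (a - b : F) = -(b - a) := by ring
        rw [this, hrneg]
        simp [hab, Option.some.injEq]
    -- transport along an equivalence Fin (q+1) ≃ Option F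
  have hcardO : Fintype.card (Fin (q + 1)) = Fintype.card (Option F) := by
    simp [hcard]
  let e : Fin (q + 1) ≃ Option F := Fintype.equivOfCardEq hcardO
  refine ⟨M.submatrix e e, ?_, ?_, ?_⟩
  · intro i j
    simp only [Matrix.submatrix_apply]
    rcases (e i) with _ | a <;> rcases (e j) with _ | b <;> simp only [hM]
    · exact Or.inl trivial
    · exact Or.inl trivial
    · exact Or.inr trivial
    · by_cases h : a = b
      · left; simp [h]
      · rcases hrdich _ (sub_ne_zero.mpr fun hc => h hc.symm) with hd | hd
        · left; simp [h, hd]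
        · right; simp [h, hd]
  · rw [Matrix.transpose_submatrix, Matrix.submatrix_mul_equiv, hMorth]
    ext i j
    simp [Matrix.submatrix_apply, Matrix.one_apply, e.injective.eq_iff]
  · rw [Matrix.transpose_submatrix]
    have hre : M.submatrix ⇑e ⇑e + M.transpose.submatrix ⇑e ⇑e
        = (M + M.transpose).submatrix e e := rfl
    rw [hre, hMskew]
    ext i j
    simp [Matrix.submatrix_apply, Matrix.one_apply, e.injective.eq_iff]
end

section
/- Let q ≡ 1 (mod 4) be a prime power. Then there exists a Hadamard matrix of order 2(q + 1) (Paley's second construction). -/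
open Matrix Finset Kronecker

section CharSums

variable {F : Type*} [Field F] [Fintype F] [DecidableEq F]

lemma paleyII_char_sum_shift (hF : ringChar F ≠ 2) {a : F} (ha : a ≠ 0) :
    ∑ x : F, quadraticChar F x * quadraticChar F (x + a) = -1 := by
  have hq := quadraticChar_isQuadratic F
  have hne := quadraticChar_ne_one hF
  have hJ : jacobiSum (quadraticChar F) (quadraticChar F) = - quadraticChar F (-1) := by
    nth_rewrite 2 [← hq.inv]
    exact jacobiSum_nontrivial_inv hne
  have hone : quadraticChar F (-1) * quadraticChar F (-1) = 1 := by
    rw [← sq]; exact quadraticChar_sq_one (neg_ne_zero.mpr one_ne_zero)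
  have hsq : quadraticChar F a * quadraticChar F a = 1 := by
    rw [← sq]; exact quadraticChar_sq_one ha
  let e : F ≃ F := Equiv.mulLeft₀ (-a) (neg_ne_zero.mpr ha)
  calc ∑ x : F, quadraticChar F x * quadraticChar F (x + a)
      = ∑ y : F, quadraticChar F (e y) * quadraticChar F (e y + a) :=
        (Equiv.sum_comp e fun x => quadraticChar F x * quadraticChar F (x + a)).symm
    _ = ∑ y : F, quadraticChar F (-1) *
          (quadraticChar F y * quadraticChar F (1 - y)) := by
        refine Finset.sum_congr rfl fun y _ => ?_
        have h1 : (e y : F) = -a * y := rfl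
        have h2 : (-a * y) + a = a * (1 - y) := by ring
        have hmul : quadraticChar F (-a) * quadraticChar F a = quadraticChar F (-1) := by
          rw [← _root_.map_mul, show (-a) * a = (-1) * (a * a) by ring, _root_.map_mul, _root_.map_mul, hsq,
            mul_one]
        rw [h1, h2, _root_.map_mul, _root_.map_mul, ← hmul]
        ring
    _ = quadraticChar F (-1) * jacobiSum (quadraticChar F) (quadraticChar F) := by
        rw [← Finset.mul_sum, jacobiSum]
    _ = -1 := by rw [hJ, mul_neg, hone]

lemma paleyII_char_neg_one (h4 : Fintype.card F % 4 = 1) :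
    quadraticChar F (-1) = 1 := by
  have hF : ringChar F ≠ 2 := by
    intro h
    have := FiniteField.even_card_of_char_two h
    omega
  rw [quadraticChar_neg_one hF, ZMod.χ₄_nat_one_mod_four h4]

end CharSums

section Conf

variable (F : Type*) [Field F] [Fintype F] [DecidableEq F]

/-- The Paley conference matrix, indexed by `Option F`. -/
noncomputable def paleyConf : Matrix (Option F) (Option F) ℝ := fun i j =>
  match i, j with
  | none, none => 0
  | none, some _ => 1
  | some _, none => 1
  | some a, some b => ((quadraticChar F (a - b) : ℤ) : ℝ)

variable {F}

lemma paleyConf_hF (h4 : Fintype.card F % 4 = 1) : ringChar F ≠ 2 := by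
  intro h
  have := FiniteField.even_card_of_char_two h
  omega

lemma paleyConf_symm (h4 : Fintype.card F % 4 = 1) : (paleyConf F)ᵀ = paleyConf F := by
  ext i j
  cases i with
  | none => cases j <;> rfl
  | some a =>
    cases j with
    | none => rfl
    | some b =>
      show ((quadraticChar F (b - a) : ℤ) : ℝ) = ((quadraticChar F (a - b) : ℤ) : ℝ)
      have : a - b = (-1) * (b - a) := by ring
      rw [this, _root_.map_mul, paleyII_char_neg_one h4, one_mul]

lemma paleyConf_diag (i : Option F) : paleyConf F i i = 0 := by
  cases i with
  | none => rfl
  | some a =>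
    show ((quadraticChar F (a - a) : ℤ) : ℝ) = 0
    rw [sub_self, quadraticChar_zero]; norm_num

lemma paleyConf_off {i j : Option F} (h : i ≠ j) :
    paleyConf F i j = 1 ∨ paleyConf F i j = -1 := by
  cases i with
  | none =>
    cases j with
    | none => exact absurd rfl h
    | some b => exact Or.inl rfl
  | some a =>
    cases j with
    | none => exact Or.inl rfl
    | some b =>
      have hab : a - b ≠ 0 := sub_ne_zero.mpr (fun hh => h (by rw [hh]))
      rcases quadraticChar_dichotomy hab with hc | hc
      · left; show ((quadraticChar F (a - b) : ℤ) : ℝ) = 1; rw [hc]; norm_num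
      · right; show ((quadraticChar F (a - b) : ℤ) : ℝ) = -1; rw [hc]; norm_num

lemma paleyConf_mul (h4 : Fintype.card F % 4 = 1) :
    paleyConf F * (paleyConf F)ᵀ = ((Fintype.card F : ℕ) : ℝ) • 1 := by
  have hF : ringChar F ≠ 2 := paleyConf_hF h4
  have hsumzero : ∀ c : F, ∑ x : F, ((quadraticChar F (c - x) : ℤ) : ℝ) = 0 := by
    intro c
    have : ∑ x : F, (quadraticChar F (c - x) : ℤ) = ∑ y : F, (quadraticChar F y : ℤ) :=
      Fintype.sum_equiv (Equiv.subLeft c) _ _ (fun x => rfl)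
    rw [← Int.cast_sum, this, quadraticChar_sum_zero hF]
    norm_num
  ext i j
  rw [Matrix.mul_apply]
  simp only [Matrix.transpose_apply]
  cases i with
  | none =>
    cases j with
    | none =>
      rw [Fintype.sum_option]
      show (0 : ℝ) * 0 + ∑ x : F, (1 : ℝ) * 1 = _
      simp [Matrix.one_apply]
    | some b =>
      rw [Fintype.sum_option]
      show (0 : ℝ) * 1 + ∑ x : F, 1 * ((quadraticChar F (b - x) : ℤ) : ℝ) = _
      simp only [zero_mul, one_mul, zero_add, hsumzero b]
      simp [Matrix.one_apply]
  | some a =>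
    cases j with
    | none =>
      rw [Fintype.sum_option]
      show (1 : ℝ) * 0 + ∑ x : F, ((quadraticChar F (a - x) : ℤ) : ℝ) * 1 = _
      simp only [mul_zero, mul_one, zero_add, hsumzero a]
      simp [Matrix.one_apply]
    | some b =>
      rw [Fintype.sum_option]
      show (1 : ℝ) * 1 + ∑ x : F, ((quadraticChar F (a - x) : ℤ) : ℝ) *
        ((quadraticChar F (b - x) : ℤ) : ℝ) = _
      by_cases hab : a = b
      · subst hab
        have hterm : ∀ x : F, ((quadraticChar F (a - x) : ℤ) : ℝ) *
            ((quadraticChar F (a - x) : ℤ) : ℝ) =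
            if x = a then 0 else 1 := by
          intro x
          by_cases hx : x = a
          · subst hx; rw [sub_self, quadraticChar_zero]; norm_num
          · have : a - x ≠ 0 := sub_ne_zero.mpr (fun hh => hx hh.symm)
            rcases quadraticChar_dichotomy this with hc | hc <;>
              simp [hc, hx]
        rw [Finset.sum_congr rfl (fun x _ => hterm x)]
        have hsplit : ∑ x : F, (if x = a then (0:ℝ) else 1) =
            (∑ x : F, (1:ℝ)) - 1 := by
          rw [eq_sub_iff_add_eq]
          nth_rewrite 2 [show (1:ℝ) =
            ∑ x : F, (if x = a then (1:ℝ) else 0) from by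
              rw [Finset.sum_ite_eq' Finset.univ a (fun _ => (1:ℝ))]; simp]
          rw [← Finset.sum_add_distrib]
          refine Finset.sum_congr rfl fun x _ => ?_
          by_cases hx : x = a <;> simp [hx]
        rw [hsplit]
        simp only [Finset.sum_const, Finset.card_univ, nsmul_eq_mul, mul_one,
          Matrix.smul_apply, Matrix.one_apply_eq, smul_eq_mul]
        ring
      · have hc : b - a ≠ 0 := sub_ne_zero.mpr (fun hh => hab hh.symm)
        have key : ∑ x : F, (quadraticChar F (a - x) : ℤ) * (quadraticChar F (b - x)) = -1 := by
          have := paleyII_char_sum_shift hF (a := a - b) (sub_ne_zero.mpr hab)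
          calc ∑ x : F, (quadraticChar F (a - x) : ℤ) * (quadraticChar F (b - x))
              = ∑ y : F, (quadraticChar F y : ℤ) * (quadraticChar F (y + (a - b))) := by
                refine Fintype.sum_equiv (Equiv.subLeft b) _ _ fun x => ?_
                have h1 : (Equiv.subLeft b) x = b - x := rfl
                rw [h1, show b - x + (a - b) = a - x by ring, mul_comm]
            _ = -1 := this
        have : ∑ x : F, ((quadraticChar F (a - x) : ℤ) : ℝ) *
            ((quadraticChar F (b - x) : ℤ) : ℝ) = -1 := by
          have := congrArg (fun z : ℤ => (z : ℝ)) key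
          push_cast at this ⊢
          exact this
        rw [this]
        simp [Matrix.one_apply, hab]

end Conf

section Assembly

lemma paleyII_assembly {I : Type*} [Fintype I] [DecidableEq I] (n : ℕ)
    (C : Matrix I I ℝ) (hsym : Cᵀ = C) (hmul : C * Cᵀ = ((n : ℕ) : ℝ) • 1)
    (hdiag : ∀ i, C i i = 0) (hoff : ∀ i j, i ≠ j → C i j = 1 ∨ C i j = -1) :
    ∃ H : Matrix (I × Fin 2) (I × Fin 2) ℝ,
      (∀ i j, H i j = 1 ∨ H i j = -1) ∧
      H * Hᵀ = ((2 * (n + 1) : ℕ) : ℝ) • 1 := by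
  classical
  set A : Matrix (Fin 2) (Fin 2) ℝ := !![1, 1; 1, -1] with hA
  set B : Matrix (Fin 2) (Fin 2) ℝ := !![1, -1; -1, -1] with hB
  have hAsym : Aᵀ = A := by
    ext i j; fin_cases i <;> fin_cases j <;> simp [hA]
  have hBsym : Bᵀ = B := by
    ext i j; fin_cases i <;> fin_cases j <;> simp [hB]
  have hAA : A * A = (2 : ℝ) • 1 := by
    ext i j; fin_cases i <;> fin_cases j <;>
      simp [hA, Matrix.mul_apply, Fin.sum_univ_two, Matrix.one_apply] <;> norm_num
  have hBB : B * B = (2 : ℝ) • 1 := by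
    ext i j; fin_cases i <;> fin_cases j <;>
      simp [hB, Matrix.mul_apply, Fin.sum_univ_two, Matrix.one_apply] <;> norm_num
  have hABBA : A * B + B * A = 0 := by
    ext i j; fin_cases i <;> fin_cases j <;>
      simp [hA, hB, Matrix.mul_apply, Fin.sum_univ_two] <;> norm_num
  refine ⟨C ⊗ₖ A + (1 : Matrix I I ℝ) ⊗ₖ B, ?_, ?_⟩
  · rintro ⟨i, s⟩ ⟨j, t⟩
    have hBval : ∀ s t : Fin 2, B s t = 1 ∨ B s t = -1 := by
      intro s t; fin_cases s <;> fin_cases t <;> simp [hB]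
    have hAval : ∀ s t : Fin 2, A s t = 1 ∨ A s t = -1 := by
      intro s t; fin_cases s <;> fin_cases t <;> simp [hA]
    simp only [Matrix.add_apply, Matrix.kroneckerMap_apply, Matrix.one_apply]
    by_cases hij : i = j
    · subst hij
      rw [hdiag i, zero_mul, zero_add, if_pos rfl, one_mul]
      exact hBval s t
    · rw [if_neg hij, zero_mul, add_zero]
      rcases hoff i j hij with hc | hc <;> rcases hAval s t with hc' | hc' <;>
        rw [hc, hc'] <;> norm_num
  · have expand :
        (C ⊗ₖ A + (1 : Matrix I I ℝ) ⊗ₖ B) * (C ⊗ₖ A + (1 : Matrix I I ℝ) ⊗ₖ B)ᵀ =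
        (C * C) ⊗ₖ (A * A) + (C ⊗ₖ (A * B) + C ⊗ₖ (B * A)) +
          (1 : Matrix I I ℝ) ⊗ₖ (B * B) := by
      rw [Matrix.transpose_add, ← Matrix.kroneckerMap_transpose, ← Matrix.kroneckerMap_transpose,
        hsym, hAsym, hBsym, Matrix.transpose_one]
      rw [Matrix.add_mul, Matrix.mul_add, Matrix.mul_add]
      rw [← Matrix.mul_kronecker_mul, ← Matrix.mul_kronecker_mul, ← Matrix.mul_kronecker_mul,
        ← Matrix.mul_kronecker_mul, Matrix.one_mul, Matrix.mul_one, Matrix.one_mul]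
      abel
    rw [expand, ← Matrix.kronecker_add, hABBA, Matrix.kronecker_zero, add_zero]
    have hCC : C * C = ((n : ℕ) : ℝ) • 1 := by
      calc C * C = C * Cᵀ := by rw [hsym]
        _ = _ := hmul
    rw [hCC, hAA, hBB]
    simp only [Matrix.smul_kronecker, Matrix.kronecker_smul, Matrix.one_kronecker_one,
      smul_smul]
    have hval : ((2 * (n + 1) : ℕ) : ℝ) = (n : ℝ) * 2 + 2 := by push_cast; ring
    rw [hval, add_smul]
    norm_num
    ring_nf

end Assembly

theorem paley_II (q : ℕ) (hq : ∃ p k : ℕ, p.Prime ∧ 0 < k ∧ q = p ^ k)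
    (h4 : q % 4 = 1) :
    ∃ H : Matrix (Fin (2 * (q + 1))) (Fin (2 * (q + 1))) ℝ,
      (∀ i j, H i j = 1 ∨ H i j = -1) ∧
      H * H.transpose =
        ((2 * (q + 1) : ℕ) : ℝ) • (1 : Matrix (Fin (2 * (q + 1))) (Fin (2 * (q + 1))) ℝ) := by
  classical
  obtain ⟨p, k, hp, hk, hqpk⟩ := hq
  haveI : Fact p.Prime := ⟨hp⟩
  set F := GaloisField p k with hF
  letI : Fintype F := Fintype.ofFinite F
  letI : DecidableEq F := Classical.decEq F
  have hcard : Fintype.card F = q := by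
    rw [← Nat.card_eq_fintype_card, GaloisField.card p k hk.ne', hqpk]
  have h4F : Fintype.card F % 4 = 1 := by rw [hcard]; exact h4
  obtain ⟨H0, hent, hmul⟩ := paleyII_assembly q (paleyConf F) (paleyConf_symm h4F)
    (by rw [← hcard]; exact paleyConf_mul h4F) paleyConf_diag
    (fun i j h => paleyConf_off h)
  have hcard2 : Fintype.card (Option F × Fin 2) = 2 * (q + 1) := by
    simp [Fintype.card_option, hcard]
    ring
  let e : (Option F × Fin 2) ≃ Fin (2 * (q + 1)) := Fintype.equivFinOfCardEq hcard2
  refine ⟨(Matrix.reindex e e) H0, ?_, ?_⟩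
  · intro i j
    exact hent _ _
  · rw [Matrix.reindex_apply, Matrix.transpose_submatrix, Matrix.submatrix_mul_equiv, hmul]
    ext i j
    simp only [Matrix.submatrix_apply, Matrix.smul_apply, Matrix.one_apply,
      EmbeddingLike.apply_eq_iff_eq]
end

section
/- If A, B, C, D are circulant n×n ±1 matrices satisfying A Aᵀ + B Bᵀ + C Cᵀ + D Dᵀ = 4nI, and R is the n×n anti-diagonal permutation matrix, then the Goethals–Seidel array GS(A,B,C,D) = [[A, BR, CR, DR], [-BR, A, DᵀR, -CᵀR], [-CR, -DᵀR, A, BᵀR], [-DR, CᵀR, -BᵀR, A]] is a Hadamard matrix of order 4n. -/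
set_option linter.unusedSectionVars false
set_option maxHeartbeats 1000000


/-- The 4×4 block matrix built from the 4×4 array of blocks `M`. -/
def blockMat4 {m : Type*} (M : Fin 4 → Fin 4 → Matrix m m ℝ) :
    Matrix (Fin 4 × m) (Fin 4 × m) ℝ :=
  Matrix.of fun p q => M p.1 q.1 p.2 q.2

/-- A matrix indexed by `ZMod n` is circulant. -/
def IsCirculant {n : ℕ} (A : Matrix (ZMod n) (ZMod n) ℝ) : Prop :=
  ∀ k i j : ZMod n, A (i + k) (j + k) = A i j

/-- The anti-diagonal permutation (reversal) matrix on `ZMod n`. -/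
def revMat (n : ℕ) : Matrix (ZMod n) (ZMod n) ℝ :=
  Matrix.of fun i j => if i + j + 1 = 0 then 1 else 0

/-- The Goethals–Seidel array of four matrices. -/
def GSarray {n : ℕ} [NeZero n] (A B C D : Matrix (ZMod n) (ZMod n) ℝ) :
    Matrix (Fin 4 × ZMod n) (Fin 4 × ZMod n) ℝ :=
  blockMat4
    ![![A, B * revMat n, C * revMat n, D * revMat n],
      ![-(B * revMat n), A, D.transpose * revMat n, -(C.transpose * revMat n)],
      ![-(C * revMat n), -(D.transpose * revMat n), A, B.transpose * revMat n],
      ![-(D * revMat n), C.transpose * revMat n, -(B.transpose * revMat n), A]]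

variable {n : ℕ} [NeZero n] {A B X Y : Matrix (ZMod n) (ZMod n) ℝ}

lemma circ_apply (h : IsCirculant A) (i j : ZMod n) : A i j = A 0 (j - i) := by
  have := h (-i) i j
  simp only [add_neg_cancel] at this
  rw [← this, sub_eq_add_neg]

lemma revMat_apply (i j : ZMod n) : revMat n i j = if j = -i - 1 then 1 else 0 := by
  unfold revMat
  simp only [Matrix.of_apply]
  rw [if_congr (show (i + j + 1 = 0) ↔ (j = -i - 1) by
    constructor <;> intro h <;> linear_combination h) rfl rfl]

lemma revMat_apply' (i j : ZMod n) : revMat n i j = if i = -j - 1 then 1 else 0 := by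
  rw [revMat_apply, if_congr (show (j = -i - 1) ↔ (i = -j - 1) by
    constructor <;> intro h <;> linear_combination h) rfl rfl]

lemma mul_revMat_apply (X : Matrix (ZMod n) (ZMod n) ℝ) (i j : ZMod n) :
    (X * revMat n) i j = X i (-j - 1) := by
  rw [Matrix.mul_apply]
  simp [revMat_apply', Finset.sum_ite_eq']

lemma revMat_mul_apply (X : Matrix (ZMod n) (ZMod n) ℝ) (i j : ZMod n) :
    (revMat n * X) i j = X (-i - 1) j := by
  rw [Matrix.mul_apply]
  simp [revMat_apply, Finset.sum_ite_eq]

lemma revMat_transpose : (revMat n).transpose = revMat n := by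
  ext i j
  rw [Matrix.transpose_apply, revMat_apply, revMat_apply']

lemma revMat_mul_revMat : revMat n * revMat n = 1 := by
  ext i j
  rw [mul_revMat_apply, revMat_apply, Matrix.one_apply]
  rw [if_congr (show (-j - 1 = -i - 1) ↔ (i = j) by
    constructor <;> intro h <;> linear_combination h) rfl rfl]

lemma rev_rev_cancel (X : Matrix (ZMod n) (ZMod n) ℝ) :
    revMat n * (revMat n * X) = X := by
  rw [← mul_assoc, revMat_mul_revMat, one_mul]

lemma transpose_circulant (h : IsCirculant A) : IsCirculant A.transpose := by
  intro k i j; simp [Matrix.transpose_apply, h k j i]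

lemma circ_mul_comm (hX : IsCirculant X) (hY : IsCirculant Y) : X * Y = Y * X := by
  ext i j
  rw [Matrix.mul_apply, Matrix.mul_apply]
  rw [← Equiv.sum_comp (Equiv.subLeft (i + j)) (fun k => X i k * Y k j)]
  apply Finset.sum_congr rfl
  intro k _
  simp only [Equiv.subLeft_apply]
  rw [circ_apply hY i k, circ_apply hX k j, circ_apply hX i, circ_apply hY _ j]
  rw [mul_comm]
  congr 2 <;> ring

lemma swap3 (hX : IsCirculant X) (hY : IsCirculant Y) (Z : Matrix (ZMod n) (ZMod n) ℝ) :
    X * (Y * Z) = Y * (X * Z) := by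
  rw [← mul_assoc, circ_mul_comm hX hY, mul_assoc]

lemma rev_comm (h : IsCirculant X) : revMat n * X.transpose = X * revMat n := by
  ext i j
  rw [revMat_mul_apply, mul_revMat_apply, Matrix.transpose_apply]
  rw [circ_apply h j, circ_apply h i]
  congr 1; ring

lemma rev_comm' (h : IsCirculant X) : revMat n * X = X.transpose * revMat n := by
  have := rev_comm (transpose_circulant h)
  rwa [Matrix.transpose_transpose] at this

lemma rev_comm_assoc (h : IsCirculant X) (Z : Matrix (ZMod n) (ZMod n) ℝ) :
    revMat n * (X.transpose * Z) = X * (revMat n * Z) := by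
  rw [← mul_assoc, ← mul_assoc, rev_comm h]

lemma rev_comm'_assoc (h : IsCirculant X) (Z : Matrix (ZMod n) (ZMod n) ℝ) :
    revMat n * (X * Z) = X.transpose * (revMat n * Z) := by
  rw [← mul_assoc, ← mul_assoc, rev_comm' h]

lemma blockMat4_mul_transpose {m : Type*} [Fintype m] [DecidableEq m]
    (M N : Fin 4 → Fin 4 → Matrix m m ℝ) :
    blockMat4 M * (blockMat4 N).transpose =
      blockMat4 (fun i j => ∑ k : Fin 4, M i k * (N j k).transpose) := by
  ext p q
  simp only [blockMat4, Matrix.of_apply, Matrix.mul_apply, Matrix.transpose_apply,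
    Fintype.sum_prod_type, Matrix.sum_apply]

lemma neg_pm {x : ℝ} (h : x = 1 ∨ x = -1) : -x = 1 ∨ -x = -1 := by
  rcases h with h | h <;> simp [h]


def GSb {n : ℕ} [NeZero n] (A B C D : Matrix (ZMod n) (ZMod n) ℝ) :
    Fin 4 → Fin 4 → Matrix (ZMod n) (ZMod n) ℝ :=
  ![![A, B * revMat n, C * revMat n, D * revMat n],
    ![-(B * revMat n), A, D.transpose * revMat n, -(C.transpose * revMat n)],
    ![-(C * revMat n), -(D.transpose * revMat n), A, B.transpose * revMat n],
    ![-(D * revMat n), C.transpose * revMat n, -(B.transpose * revMat n), A]]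

lemma GSarray_eq {n : ℕ} [NeZero n] (A B C D : Matrix (ZMod n) (ZMod n) ℝ) :
    GSarray A B C D = blockMat4 (GSb A B C D) := rfl
lemma neg_pm' {x : ℝ} (h : x = 1 ∨ x = -1) : -x = 1 ∨ x = 1 := by
  rcases h with h | h <;> simp [h]
lemma key_blocks {n : ℕ} [NeZero n] {A B C D : Matrix (ZMod n) (ZMod n) ℝ}
    (hA : IsCirculant A) (hB : IsCirculant B) (hC : IsCirculant C) (hD : IsCirculant D)
    (hsum : A * A.transpose + B * B.transpose + C * C.transpose + D * D.transpose =
      ((4 * n : ℕ) : ℝ) • (1 : Matrix (ZMod n) (ZMod n) ℝ)) (i j : Fin 4) :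
    (∑ k : Fin 4, GSb A B C D i k * (GSb A B C D j k).transpose) =
      if i = j then ((4 * n : ℕ) : ℝ) • (1 : Matrix (ZMod n) (ZMod n) ℝ) else 0 := by
  have hA' := transpose_circulant hA
  have hB' := transpose_circulant hB
  have hC' := transpose_circulant hC
  have hD' := transpose_circulant hD
  fin_cases i <;> fin_cases j <;>
    simp [GSb, Fin.sum_univ_four] <;>
    simp only [Matrix.transpose_neg, Matrix.transpose_mul, Matrix.transpose_transpose,
      revMat_transpose, Matrix.mul_neg, Matrix.neg_mul, neg_neg, mul_assoc,
      rev_comm hA, rev_comm hB, rev_comm hC, rev_comm hD,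
      rev_comm' hA, rev_comm' hB, rev_comm' hC, rev_comm' hD,
      rev_comm_assoc hA, rev_comm_assoc hB, rev_comm_assoc hC, rev_comm_assoc hD,
      rev_comm'_assoc hA, rev_comm'_assoc hB, rev_comm'_assoc hC, rev_comm'_assoc hD,
      rev_rev_cancel, revMat_mul_revMat, mul_one]
  · push_cast at hsum; exact hsum
  · rw [swap3 hB hA, circ_mul_comm hD hC]; abel
  · rw [swap3 hC hA, circ_mul_comm hD hB]; abel
  · rw [swap3 hD hA, circ_mul_comm hC hB]; abel
  · rw [swap3 hB hA, circ_mul_comm hD' hC']; abel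
  · push_cast at hsum
    rw [circ_mul_comm hD' hD, circ_mul_comm hC' hC, ← hsum]; abel
  · rw [swap3 hD' hA, circ_mul_comm hC' hB]; abel
  · rw [swap3 hC' hA, circ_mul_comm hD' hB]; abel
  · rw [swap3 hC hA, circ_mul_comm hD' hB']; abel
  · rw [swap3 hD' hA, circ_mul_comm hB' hC]; abel
  · push_cast at hsum
    rw [circ_mul_comm hD' hD, circ_mul_comm hB' hB, ← hsum]; abel
  · rw [swap3 hB' hA, circ_mul_comm hD' hC]; abel
  · rw [swap3 hD hA, circ_mul_comm hC' hB']; abel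
  · rw [swap3 hC' hA, circ_mul_comm hB' hD]; abel
  · rw [swap3 hB' hA, circ_mul_comm hC' hD]; abel
  · push_cast at hsum
    rw [circ_mul_comm hC' hC, circ_mul_comm hB' hB, ← hsum]; abel
theorem goethals_seidel (n : ℕ) [NeZero n]
    (A B C D : Matrix (ZMod n) (ZMod n) ℝ)
    (hpm : ∀ M ∈ [A, B, C, D], ∀ i j, M i j = 1 ∨ M i j = -1)
    (hcirc : IsCirculant A ∧ IsCirculant B ∧ IsCirculant C ∧ IsCirculant D)
    (hsum : A * A.transpose + B * B.transpose + C * C.transpose + D * D.transpose =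
      ((4 * n : ℕ) : ℝ) • (1 : Matrix (ZMod n) (ZMod n) ℝ)) :
    (∀ p q, GSarray A B C D p q = 1 ∨ GSarray A B C D p q = -1) ∧
    GSarray A B C D * (GSarray A B C D).transpose =
      ((4 * n : ℕ) : ℝ) • (1 : Matrix (Fin 4 × ZMod n) (Fin 4 × ZMod n) ℝ) := by
  obtain ⟨hA, hB, hC, hD⟩ := hcirc
  have hpmA := hpm A (by simp)
  have hpmB := hpm B (by simp)
  have hpmC := hpm C (by simp)
  have hpmD := hpm D (by simp)
  constructor
  · rintro ⟨p1, p2⟩ ⟨q1, q2⟩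
    fin_cases p1 <;> fin_cases q1 <;>
      simp [GSarray, GSb, blockMat4, mul_revMat_apply, Matrix.neg_apply,
        Matrix.transpose_apply] <;>
      first
        | exact hpmA _ _ | exact hpmB _ _ | exact hpmC _ _ | exact hpmD _ _
        | exact neg_pm (hpmB _ _) | exact neg_pm (hpmC _ _) | exact neg_pm (hpmD _ _)
        | exact neg_pm' (hpmB _ _) | exact neg_pm' (hpmC _ _) | exact neg_pm' (hpmD _ _)
  · rw [GSarray_eq, blockMat4_mul_transpose]
    ext ⟨p1, p2⟩ ⟨q1, q2⟩
    simp only [blockMat4, Matrix.of_apply]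
    rw [key_blocks hA hB hC hD hsum]
    rcases eq_or_ne p1 q1 with h | h <;>
      simp [h, Matrix.smul_apply, Matrix.one_apply, Prod.ext_iff]
end

section
/- If in the Goethals–Seidel construction additionally A = S + I with S skew-symmetric circulant, then the resulting 4n×4n Hadamard matrix GS(A,B,C,D) is skew (equals I plus a skew-symmetric matrix). -/
lemma mulRev {n : ℕ} [NeZero n] (M : Matrix (ZMod n) (ZMod n) ℝ) (i j : ZMod n) :
    (M * revMat n) i j = M i (-j - 1) := by
  simp only [Matrix.mul_apply, revMat, Matrix.of_apply]
  rw [Finset.sum_eq_single (-j - 1)]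
  · simp [show -j - 1 + j + 1 = 0 by ring]
  · intro k _ hk
    rw [if_neg, mul_zero]
    intro h
    apply hk
    linear_combination h -- k + j + 1 = 0 → k = -j-1
  · simp

lemma transpose_circ {n : ℕ} {M : Matrix (ZMod n) (ZMod n) ℝ} (hM : IsCirculant M) :
    IsCirculant M.transpose := fun k i j => hM k j i

lemma revSymm {n : ℕ} [NeZero n] {M : Matrix (ZMod n) (ZMod n) ℝ} (hM : IsCirculant M)
    (i j : ZMod n) : (M * revMat n) j i = (M * revMat n) i j := by
  rw [mulRev, mulRev]
  have := hM (i - j) j (-i - 1)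
  rw [show j + (i - j) = i by ring, show -i - 1 + (i - j) = -j - 1 by ring] at this
  exact this.symm

theorem goethals_seidel_skew (n : ℕ) [NeZero n]
    (A B C D S : Matrix (ZMod n) (ZMod n) ℝ)
    (hpm : ∀ M ∈ [A, B, C, D], ∀ i j, M i j = 1 ∨ M i j = -1)
    (hcirc : IsCirculant A ∧ IsCirculant B ∧ IsCirculant C ∧ IsCirculant D)
    (hsum : A * A.transpose + B * B.transpose + C * C.transpose + D * D.transpose =
      ((4 * n : ℕ) : ℝ) • (1 : Matrix (ZMod n) (ZMod n) ℝ))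
    (hA : A = S + 1) (hSskew : S.transpose = -S) (hScirc : IsCirculant S) :
    GSarray A B C D + (GSarray A B C D).transpose =
      (2 : ℝ) • (1 : Matrix (Fin 4 × ZMod n) (Fin 4 × ZMod n) ℝ) := by
  obtain ⟨hcA, hcB, hcC, hcD⟩ := hcirc
  have hAdiag : ∀ i j : ZMod n, A i j + A j i = 2 * (1 : Matrix (ZMod n) (ZMod n) ℝ) i j := by
    intro i j
    have h1 : S.transpose i j = -S i j := by rw [hSskew]; rfl
    have h2 : S j i = S.transpose i j := rfl
    subst hA
    simp only [Matrix.add_apply, Matrix.one_apply]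
    rw [h2, h1]
    by_cases h : i = j
    · simp [h]; try ring
    · simp [h, Ne.symm h]; try ring
  ext ⟨p, i⟩ ⟨q, j⟩
  simp only [Matrix.add_apply, Matrix.transpose_apply, GSarray, blockMat4, Matrix.of_apply,
    Matrix.smul_apply, Matrix.one_apply, Prod.mk.injEq, smul_eq_mul]
  fin_cases p <;> fin_cases q <;>
    simp only [Matrix.cons_val_zero, Matrix.cons_val_one, Matrix.head_cons,
      Matrix.cons_val_two, Matrix.cons_val_three, Matrix.tail_cons, Matrix.neg_apply,
      Fin.isValue, show ((⟨0, by norm_num⟩ : Fin 4) = 0) from rfl,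
      show ((⟨1, by norm_num⟩ : Fin 4) = 1) from rfl,
      show ((⟨2, by norm_num⟩ : Fin 4) = 2) from rfl,
      show ((⟨3, by norm_num⟩ : Fin 4) = 3) from rfl] <;>
    first
    | (have := hAdiag i j; simp only [Matrix.one_apply] at this; simpa using this)
    | ((first
       | rw [revSymm hcB j i]
       | rw [revSymm hcC j i]
       | rw [revSymm hcD j i]
       | rw [revSymm (transpose_circ hcB) j i]
       | rw [revSymm (transpose_circ hcC) j i]
       | rw [revSymm (transpose_circ hcD) j i]) <;> simp)
end

section
/- If A, B, C, D are four ±1 sequences of lengths n+p, n+p, n, n that are base sequences (N_A(j)+N_B(j)+N_C(j)+N_D(j)=0 for all j ≥ 1), then T₁ = ½(A+B);0_n, T₂ = ½(A−B);0_n, T₃ = 0_{n+p};½(C+D), T₄ = 0_{n+p};½(C−D) are T-sequences of length 2n+p. -/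
/-- Nonperiodic autocorrelation of a finite integer sequence. -/
def NA (A : List ℤ) (j : ℕ) : ℤ :=
  ∑ i ∈ Finset.range (A.length - j), A.getD i 0 * A.getD (i + j) 0

/-- A sequence with all entries ±1. -/
def IsPM1 (A : List ℤ) : Prop := ∀ x ∈ A, x = 1 ∨ x = -1

/-- Four `(−1,0,1)` sequences of length `n` are T-sequences if their nonperiodic
autocorrelations sum to zero for all `j ≥ 1` and, at each position, exactly one
of the four entries is nonzero. -/
def IsTSeq (n : ℕ) (T₁ T₂ T₃ T₄ : List ℤ) : Prop :=
  T₁.length = n ∧ T₂.length = n ∧ T₃.length = n ∧ T₄.length = n ∧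
  (∀ x ∈ T₁ ++ T₂ ++ T₃ ++ T₄, x = 1 ∨ x = 0 ∨ x = -1) ∧
  (∀ j, 1 ≤ j → NA T₁ j + NA T₂ j + NA T₃ j + NA T₄ j = 0) ∧
  (∀ i < n, ((if T₁.getD i 0 ≠ 0 then 1 else 0) + (if T₂.getD i 0 ≠ 0 then 1 else 0) +
      (if T₃.getD i 0 ≠ 0 then 1 else 0) + (if T₄.getD i 0 ≠ 0 then 1 else 0) : ℕ) = 1)

lemma getD_rep (m i : ℕ) : (List.replicate m (0:ℤ)).getD i 0 = 0 := by
  simp only [List.getD_eq_getElem?_getD, List.getElem?_replicate]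
  split <;> rfl

lemma NA_append_zeros (X : List ℤ) (m j : ℕ) :
    NA (X ++ List.replicate m 0) j = NA X j := by
  unfold NA
  rw [List.length_append, List.length_replicate]
  rw [← Finset.sum_subset (Finset.range_subset_range.mpr
        (by omega : X.length - j ≤ X.length + m - j))]
  · refine Finset.sum_congr rfl fun i hi => ?_
    simp only [Finset.mem_range] at hi
    rw [List.getD_append _ _ _ _ (by omega), List.getD_append _ _ _ _ (by omega)]
  · intro i hi hni
    simp only [Finset.mem_range] at hi hni
    by_cases h : i < X.length
    · rw [List.getD_append_right _ _ _ (i + j) (by omega), getD_rep]; ring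
    · rw [List.getD_append_right _ _ _ i (by omega), getD_rep]; ring

lemma NA_zeros_append (Y : List ℤ) (m j : ℕ) :
    NA (List.replicate m 0 ++ Y) j = NA Y j := by
  unfold NA
  rw [List.length_append, List.length_replicate]
  have hsub : Finset.Ico m (m + Y.length - j) ⊆ Finset.range (m + Y.length - j) := by
    intro i hi; simp only [Finset.mem_Ico] at hi; exact Finset.mem_range.mpr hi.2
  rw [← Finset.sum_subset hsub (fun i hi hni => ?_)]
  · rw [Finset.sum_Ico_eq_sum_range, (by omega : m + Y.length - j - m = Y.length - j)]
    refine Finset.sum_congr rfl fun k hk => ?_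
    rw [List.getD_append_right _ _ _ (m + k) (by simp),
        List.getD_append_right _ _ _ (m + k + j) (by rw [List.length_replicate]; omega)]
    simp only [List.length_replicate]
    rw [(by omega : m + k - m = k), (by omega : m + k + j - m = k + j)]
  · simp only [Finset.mem_range] at hi
    simp only [Finset.mem_Ico, not_and, not_lt] at hni
    have him : i < m := by by_contra h; push_neg at h; omega
    rw [List.getD_append _ _ _ _ (by simpa using him), getD_rep]; ring

lemma getD_zip (f : ℤ → ℤ → ℤ) (A B : List ℤ) (i : ℕ)
    (hiA : i < A.length) (hiB : i < B.length) :
    (List.zipWith f A B).getD i 0 = f (A.getD i 0) (B.getD i 0) := by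
  rw [List.getD_eq_getElem _ _ (by rw [List.length_zipWith]; omega),
      List.getD_eq_getElem _ _ hiA, List.getD_eq_getElem _ _ hiB, List.getElem_zipWith]

lemma getD_mem_pm (A : List ℤ) (hA : IsPM1 A) {i : ℕ} (hi : i < A.length) :
    A.getD i 0 = 1 ∨ A.getD i 0 = -1 := by
  rw [List.getD_eq_getElem _ _ hi]; exact hA _ (List.getElem_mem hi)

lemma pm_identity {a b a' b' : ℤ} (ha : a = 1 ∨ a = -1) (hb : b = 1 ∨ b = -1)
    (ha' : a' = 1 ∨ a' = -1) (hb' : b' = 1 ∨ b' = -1) :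
    2 * (((a + b) / 2) * ((a' + b') / 2) + ((a - b) / 2) * ((a' - b') / 2)) = a * a' + b * b' := by
  rcases ha with rfl|rfl <;> rcases hb with rfl|rfl <;> rcases ha' with rfl|rfl <;>
    rcases hb' with rfl|rfl <;> decide

lemma pm_if {a b : ℤ} (ha : a = 1 ∨ a = -1) (hb : b = 1 ∨ b = -1) :
    ((if (a + b) / 2 ≠ 0 then 1 else 0) + (if (a - b) / 2 ≠ 0 then 1 else 0) : ℕ) = 1 := by
  rcases ha with rfl|rfl <;> rcases hb with rfl|rfl <;> decide

lemma NA_zip_sum (A B : List ℤ) (h : A.length = B.length)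
    (hA : IsPM1 A) (hB : IsPM1 B) (j : ℕ) :
    2 * (NA (List.zipWith (fun a b => (a + b) / 2) A B) j +
         NA (List.zipWith (fun a b => (a - b) / 2) A B) j) = NA A j + NA B j := by
  unfold NA
  rw [List.length_zipWith, List.length_zipWith, ← h, min_self]
  rw [← Finset.sum_add_distrib, ← Finset.sum_add_distrib, Finset.mul_sum]
  refine Finset.sum_congr rfl fun i hi => ?_
  simp only [Finset.mem_range] at hi
  rw [getD_zip _ _ _ i (by omega) (by omega), getD_zip _ _ _ (i + j) (by omega) (by omega),
      getD_zip _ _ _ i (by omega) (by omega), getD_zip _ _ _ (i + j) (by omega) (by omega)]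
  exact pm_identity (getD_mem_pm A hA (by omega)) (getD_mem_pm B hB (by omega))
    (getD_mem_pm A hA (by omega)) (getD_mem_pm B hB (by omega))

theorem t_sequences_from_base_sequences (n p : ℕ) (A B C D : List ℤ)
    (hA : A.length = n + p) (hB : B.length = n + p) (hC : C.length = n) (hD : D.length = n)
    (hpm : IsPM1 A ∧ IsPM1 B ∧ IsPM1 C ∧ IsPM1 D)
    (hbase : ∀ j, 1 ≤ j → NA A j + NA B j + NA C j + NA D j = 0) :
    IsTSeq (2 * n + p)
      (List.zipWith (fun a b => (a + b) / 2) A B ++ List.replicate n 0)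
      (List.zipWith (fun a b => (a - b) / 2) A B ++ List.replicate n 0)
      (List.replicate (n + p) 0 ++ List.zipWith (fun c d => (c + d) / 2) C D)
      (List.replicate (n + p) 0 ++ List.zipWith (fun c d => (c - d) / 2) C D) := by
  obtain ⟨hpA, hpB, hpC, hpD⟩ := hpm
  have hzip : ∀ (f : ℤ → ℤ → ℤ) (P Q : List ℤ), IsPM1 P → IsPM1 Q →
      (∀ a b : ℤ, (a = 1 ∨ a = -1) → (b = 1 ∨ b = -1) → f a b = 1 ∨ f a b = 0 ∨ f a b = -1) →
      ∀ x ∈ List.zipWith f P Q, x = 1 ∨ x = 0 ∨ x = -1 := by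
    intro f P Q hP hQ hf x hx
    obtain ⟨i, hi, rfl⟩ := List.mem_iff_getElem.mp hx
    rw [List.getElem_zipWith]
    exact hf _ _ (hP _ (List.getElem_mem _)) (hQ _ (List.getElem_mem _))
  have hfp : ∀ a b : ℤ, (a = 1 ∨ a = -1) → (b = 1 ∨ b = -1) →
      (a + b) / 2 = 1 ∨ (a + b) / 2 = 0 ∨ (a + b) / 2 = -1 := by
    rintro a b (rfl|rfl) (rfl|rfl) <;> decide
  have hfm : ∀ a b : ℤ, (a = 1 ∨ a = -1) → (b = 1 ∨ b = -1) →
      (a - b) / 2 = 1 ∨ (a - b) / 2 = 0 ∨ (a - b) / 2 = -1 := by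
    rintro a b (rfl|rfl) (rfl|rfl) <;> decide
  refine ⟨?_, ?_, ?_, ?_, ?_, ?_, ?_⟩
  · simp [hA, hB]; omega
  · simp [hA, hB]; omega
  · simp [hC, hD]; omega
  · simp [hC, hD]; omega
  · intro x hx
    simp only [List.mem_append, or_assoc] at hx
    rcases hx with hx | hx | hx | hx | hx | hx | hx | hx
    · exact hzip _ A B hpA hpB hfp x hx
    · exact Or.inr (Or.inl (List.eq_of_mem_replicate hx))
    · exact hzip _ A B hpA hpB hfm x hx
    · exact Or.inr (Or.inl (List.eq_of_mem_replicate hx))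
    · exact Or.inr (Or.inl (List.eq_of_mem_replicate hx))
    · exact hzip _ C D hpC hpD hfp x hx
    · exact Or.inr (Or.inl (List.eq_of_mem_replicate hx))
    · exact hzip _ C D hpC hpD hfm x hx
  · intro j hj
    rw [NA_append_zeros, NA_append_zeros, NA_zeros_append, NA_zeros_append]
    have h1 := NA_zip_sum A B (by rw [hA, hB]) hpA hpB j
    have h2 := NA_zip_sum C D (by rw [hC, hD]) hpC hpD j
    have h3 := hbase j hj
    linarith
  · intro i hi
    by_cases hcase : i < n + p
    · rw [List.getD_append _ _ _ _ (by rw [List.length_zipWith, hA, hB]; omega),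
          List.getD_append _ _ _ _ (by rw [List.length_zipWith, hA, hB]; omega),
          List.getD_append _ _ _ _ (by simpa using hcase),
          List.getD_append _ _ _ _ (by simpa using hcase),
          getD_rep,
          getD_zip (fun a b => (a + b) / 2) A B i (by omega) (by omega),
          getD_zip (fun a b => (a - b) / 2) A B i (by omega) (by omega)]
      have := pm_if (getD_mem_pm A hpA (i := i) (by omega)) (getD_mem_pm B hpB (i := i) (by omega))
      simpa using this
    · rw [List.getD_append_right _ _ _ i (by rw [List.length_zipWith, hA, hB]; omega),
          List.getD_append_right _ _ _ i (by rw [List.length_zipWith, hA, hB]; omega),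
          List.getD_append_right _ _ _ i (by simp; omega),
          List.getD_append_right _ _ _ i (by simp; omega),
          getD_rep]
      simp only [List.length_zipWith, List.length_replicate, hA, hB, min_self]
      rw [getD_zip (fun a b => (a + b) / 2) C D (i - (n + p)) (by omega) (by omega),
          getD_zip (fun a b => (a - b) / 2) C D (i - (n + p)) (by omega) (by omega)]
      have := pm_if (getD_mem_pm C hpC (i := i - (n + p)) (by omega))
        (getD_mem_pm D hpD (i := i - (n + p)) (by omega))
      simpa using this
end

section
/- If X, Y, Z, W are Turyn type sequences of lengths n, n, n, n−1 (±1 sequences with N_X(j) + N_Y(j) + 2N_Z(j) + 2N_W(j) = 0 for all j ≥ 1), then A = Z;W, B = Z;−W, C = X, D = Y are base sequences of lengths 2n−1, 2n−1, n, n. -/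
/-- Base sequences of lengths `n+p, n+p, n, n`. -/
def IsBaseSeq (n p : ℕ) (A B C D : List ℤ) : Prop :=
  A.length = n + p ∧ B.length = n + p ∧ C.length = n ∧ D.length = n ∧
  IsPM1 A ∧ IsPM1 B ∧ IsPM1 C ∧ IsPM1 D ∧
  ∀ j, 1 ≤ j → NA A j + NA B j + NA C j + NA D j = 0

lemma getD_negmap (L : List ℤ) (k : ℕ) :
    (L.map (fun w => -w)).getD k 0 = -(L.getD k 0) := by
  rcases lt_or_ge k L.length with h | h
  · rw [List.getD_eq_getElem _ _ (by simpa using h), List.getD_eq_getElem _ _ h,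
      List.getElem_map]
  · rw [List.getD_eq_default _ _ (by simpa using h), List.getD_eq_default _ _ h, neg_zero]

lemma shift_sum (n K : ℕ) (g : ℕ → ℤ) :
    ∑ i ∈ Finset.range (n + K), (if n ≤ i then g (i - n) else 0)
      = ∑ k ∈ Finset.range K, g k := by
  induction K with
  | zero =>
    simp only [Nat.add_zero, Finset.range_zero, Finset.sum_empty]
    refine Finset.sum_eq_zero fun i hi => ?_
    rw [if_neg (by have := Finset.mem_range.1 hi; omega)]
  | succ K ih =>
    rw [← Nat.add_assoc, Finset.sum_range_succ, Finset.sum_range_succ, ih,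
      if_pos (by omega)]
    congr 2
    omega

lemma key (Z W : List ℤ) (j : ℕ) :
    NA (Z ++ W) j + NA (Z ++ W.map (fun w => -w)) j = 2 * NA Z j + 2 * NA W j := by
  have hlen1 : (Z ++ W).length = Z.length + W.length := by simp
  have hlen2 : (Z ++ W.map (fun w => -w)).length = Z.length + W.length := by simp
  have point : ∀ i : ℕ,
      (Z ++ W).getD i 0 * (Z ++ W).getD (i + j) 0 +
      (Z ++ W.map (fun w => -w)).getD i 0 * (Z ++ W.map (fun w => -w)).getD (i + j) 0
      = 2 * (Z.getD i 0 * Z.getD (i + j) 0) +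
        2 * (if Z.length ≤ i then W.getD (i - Z.length) 0 * W.getD (i - Z.length + j) 0
             else 0) := by
    intro i
    rcases lt_or_ge (i + j) Z.length with h1 | h1
    · rw [List.getD_append Z W 0 i (by omega),
        List.getD_append Z W 0 (i + j) (by omega),
        List.getD_append Z (W.map (fun w => -w)) 0 i (by omega),
        List.getD_append Z (W.map (fun w => -w)) 0 (i + j) (by omega),
        if_neg (by omega)]
      ring
    · rcases lt_or_ge i Z.length with h2 | h2
      · rw [List.getD_append Z W 0 i (by omega),
          List.getD_append Z (W.map (fun w => -w)) 0 i (by omega),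
          List.getD_append_right Z W 0 (i + j) h1,
          List.getD_append_right Z (W.map (fun w => -w)) 0 (i + j) h1,
          getD_negmap, if_neg (by omega), List.getD_eq_default _ _ h1]
        ring
      · have e : i - Z.length + j = i + j - Z.length := by omega
        rw [List.getD_append_right Z W 0 i h2,
          List.getD_append_right Z W 0 (i + j) (by omega),
          List.getD_append_right Z (W.map (fun w => -w)) 0 i h2,
          List.getD_append_right Z (W.map (fun w => -w)) 0 (i + j) (by omega),
          getD_negmap, getD_negmap, if_pos h2,
          List.getD_eq_default _ _ h2, e]
        ring
  unfold NA
  rw [hlen1, hlen2, ← Finset.sum_add_distrib]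
  have hsum : ∑ i ∈ Finset.range (Z.length + W.length - j),
      ((Z ++ W).getD i 0 * (Z ++ W).getD (i + j) 0 +
        (Z ++ W.map (fun w => -w)).getD i 0 * (Z ++ W.map (fun w => -w)).getD (i + j) 0)
      = ∑ i ∈ Finset.range (Z.length + W.length - j),
        (2 * (Z.getD i 0 * Z.getD (i + j) 0) +
          2 * (if Z.length ≤ i then W.getD (i - Z.length) 0 * W.getD (i - Z.length + j) 0
               else 0)) :=
    Finset.sum_congr rfl fun i _ => point i
  rw [hsum, Finset.sum_add_distrib, ← Finset.mul_sum, ← Finset.mul_sum]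
  have hZsum : ∑ i ∈ Finset.range (Z.length + W.length - j), Z.getD i 0 * Z.getD (i + j) 0
      = ∑ i ∈ Finset.range (Z.length - j), Z.getD i 0 * Z.getD (i + j) 0 := by
    refine (Finset.sum_subset (Finset.range_subset_range.2 (by omega)) ?_).symm
    intro i _ hi
    have : Z.length - j ≤ i := by simpa using hi
    rw [List.getD_eq_default _ _ (show Z.length ≤ i + j by omega), mul_zero]
  have hWsum : ∑ i ∈ Finset.range (Z.length + W.length - j),
      (if Z.length ≤ i then W.getD (i - Z.length) 0 * W.getD (i - Z.length + j) 0 else 0)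
      = ∑ k ∈ Finset.range (W.length - j), W.getD k 0 * W.getD (k + j) 0 := by
    rcases le_or_gt j W.length with hj | hj
    · have e : Z.length + W.length - j = Z.length + (W.length - j) := by omega
      rw [e]
      exact shift_sum Z.length (W.length - j) (fun k => W.getD k 0 * W.getD (k + j) 0)
    · have e : W.length - j = 0 := by omega
      rw [e]
      simp only [Finset.range_zero, Finset.sum_empty]
      refine Finset.sum_eq_zero fun i _ => ?_
      split_ifs with h
      · rw [List.getD_eq_default _ _ (show W.length ≤ i - Z.length + j by omega), mul_zero]
      · rfl
  rw [hZsum, hWsum]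

theorem base_sequences_from_turyn_type (n : ℕ) (hn : 1 ≤ n) (X Y Z W : List ℤ)
    (hX : X.length = n) (hY : Y.length = n) (hZ : Z.length = n) (hW : W.length = n - 1)
    (hpm : IsPM1 X ∧ IsPM1 Y ∧ IsPM1 Z ∧ IsPM1 W)
    (hturyn : ∀ j, 1 ≤ j → NA X j + NA Y j + 2 * NA Z j + 2 * NA W j = 0) :
    IsBaseSeq n (n - 1) (Z ++ W) (Z ++ W.map (fun w => -w)) X Y := by
  obtain ⟨hpX, hpY, hpZ, hpW⟩ := hpm
  refine ⟨by simp [hZ, hW], by simp [hZ, hW], hX, hY, ?_, ?_, hpX, hpY, ?_⟩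
  · intro x hx
    rcases List.mem_append.1 hx with h | h
    · exact hpZ x h
    · exact hpW x h
  · intro x hx
    rcases List.mem_append.1 hx with h | h
    · exact hpZ x h
    · obtain ⟨w, hw, rfl⟩ := List.mem_map.1 h
      rcases hpW w hw with h' | h' <;> simp [h']
  · intro j hj
    have h1 := hturyn j hj
    have h2 := key Z W j
    linarith
end

section
/- Let G be the additive group of the Galois field GF(q) where q ≡ 3 (mod 4) is a prime power, q = 2m+1, and let A = B be the set of nonzero squares in GF(q). Then A and B are complementary difference sets in G: |A| = m; α ∈ A implies −α ∉ A; and for each nonzero δ ∈ G, the equations δ = α₁ − α₂ (α₁,α₂ ∈ A) and δ = β₁ − β₂ (β₁,β₂ ∈ B) have altogether m−1 solution pairs. -/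
/-- The set of nonzero squares of a field. -/
def nonzeroSquares (F : Type*) [Field F] : Set F := {x : F | x ≠ 0 ∧ IsSquare x}

open Finset in
lemma quadChar_sum_shift {F : Type*} [Field F] [Fintype F] [DecidableEq F]
    (hF : ringChar F ≠ 2) {δ : F} (hδ : δ ≠ 0) :
    ∑ x : F, quadraticChar F x * quadraticChar F (x + δ) = -1 := by
  rw [← Finset.sum_erase Finset.univ (a := (0 : F)) (by simp)]
  have key : ∀ x ∈ Finset.univ.erase (0 : F),
      quadraticChar F x * quadraticChar F (x + δ)
        = quadraticChar F (1 + δ * x⁻¹) := by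
    intro x hx
    have hx0 : x ≠ 0 := (Finset.mem_erase.mp hx).1
    calc quadraticChar F x * quadraticChar F (x + δ)
        = quadraticChar F (x * (x + δ)) := (map_mul _ _ _).symm
      _ = quadraticChar F (x ^ 2 * (1 + δ * x⁻¹)) := by
          congr 1; field_simp
      _ = quadraticChar F (x ^ 2) * quadraticChar F (1 + δ * x⁻¹) := map_mul _ _ _
      _ = quadraticChar F (1 + δ * x⁻¹) := by
          rw [quadraticChar_sq_one' hx0, one_mul]
  rw [Finset.sum_congr rfl key]
  have hbij : ∑ x ∈ Finset.univ.erase (0 : F), quadraticChar F (1 + δ * x⁻¹)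
      = ∑ y ∈ Finset.univ.erase (1 : F), quadraticChar F y := by
    apply Finset.sum_nbij' (i := fun x => 1 + δ * x⁻¹) (j := fun y => δ * (y - 1)⁻¹)
    · intro x hx
      have hx0 : x ≠ 0 := (Finset.mem_erase.mp hx).1
      simp only [Finset.mem_erase, Finset.mem_univ, and_true]
      intro h
      have : δ * x⁻¹ = 0 := by linear_combination h
      simp [hδ, hx0] at this
    · intro y hy
      have hy1 : y ≠ 1 := (Finset.mem_erase.mp hy).1
      have : y - 1 ≠ 0 := sub_ne_zero.mpr hy1
      simp only [Finset.mem_erase, Finset.mem_univ, and_true]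
      simp [hδ, this]
    · intro x hx
      have hx0 : x ≠ 0 := (Finset.mem_erase.mp hx).1
      field_simp
      simp [hδ]
    · intro y hy
      have hy1 : y ≠ 1 := (Finset.mem_erase.mp hy).1
      have h1 : y - 1 ≠ 0 := sub_ne_zero.mpr hy1
      field_simp
      ring
    · intro x hx; rfl
  rw [hbij, Finset.sum_erase_eq_sub (Finset.mem_univ (1 : F)),
    quadraticChar_sum_zero hF, map_one]
  ring

theorem paley_complementary_difference_sets (q m : ℕ) (F : Type*) [Field F] [Fintype F]
    (hcard : Fintype.card F = q) (h4 : q % 4 = 3) (hm : q = 2 * m + 1) :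
    (nonzeroSquares F).ncard = m ∧
    (∀ a ∈ nonzeroSquares F, -a ∉ nonzeroSquares F) ∧
    ∀ δ : F, δ ≠ 0 →
      {p : F × F | p.1 ∈ nonzeroSquares F ∧ p.2 ∈ nonzeroSquares F ∧ p.1 - p.2 = δ}.ncard +
      {p : F × F | p.1 ∈ nonzeroSquares F ∧ p.2 ∈ nonzeroSquares F ∧ p.1 - p.2 = δ}.ncard
        = m - 1 := by
  classical
  have hq : Fintype.card F % 4 = 3 := by rw [hcard]; exact h4
  have hF2 : ringChar F ≠ 2 := by
    intro h
    have h2 := FiniteField.even_card_of_char_two h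
    omega
  set χ := quadraticChar F with hχdef
  have hns1 : ¬ IsSquare (-1 : F) := fun h => (FiniteField.isSquare_neg_one_iff.mp h) hq
  -- Part 2
  have part2 : ∀ a ∈ nonzeroSquares F, -a ∉ nonzeroSquares F := by
    rintro a ⟨ha0, has⟩ ⟨-, hnas⟩
    apply hns1
    have h := hnas.mul has.inv
    rwa [neg_mul, mul_inv_cancel₀ ha0] at h
  -- Finset version of nonzeroSquares
  set A : Finset F := Finset.univ.filter (fun x : F => x ≠ 0 ∧ IsSquare x) with hAdef
  have hAset : nonzeroSquares F = ↑A := by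
    ext x; simp [nonzeroSquares, hAdef]
  -- χ values on A
  -- cardinality of A
  have hAcard : (A.card : ℤ) * 2 + 1 = q := by
    have h1 : ∑ x : F, ((1 : ℤ) + χ x) = q := by
      rw [Finset.sum_add_distrib, quadraticChar_sum_zero hF2]
      simp [hcard]
    have h2 : ∀ x : F, (1 : ℤ) + χ x
        = (if x ∈ A then 2 else 0) + (if x = 0 then 1 else 0) := by
      intro x
      by_cases hx0 : x = 0
      · simp [hx0, hAdef, hχdef]
      · by_cases hxs : IsSquare x
        · have hv : χ x = 1 := (quadraticChar_one_iff_isSquare hx0).mpr hxs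
          simp [hx0, hxs, hAdef, hv]
        · have hv : χ x = -1 := quadraticChar_neg_one_iff_not_isSquare.mpr hxs
          simp [hx0, hxs, hAdef, hv]
    rw [Finset.sum_congr rfl (fun x _ => h2 x), Finset.sum_add_distrib,
      Finset.sum_ite_mem, Finset.univ_inter, Finset.sum_const,
      Finset.sum_ite_eq' Finset.univ (0 : F) (fun _ => (1 : ℤ))] at h1
    simpa [mul_comm] using h1
  have part1 : (nonzeroSquares F).ncard = m := by
    rw [hAset, Set.ncard_coe_finset]
    have : (A.card : ℤ) = m := by
      have : (q : ℤ) = 2 * m + 1 := by exact_mod_cast congrArg Nat.cast hm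
      linarith [hAcard]
    exact_mod_cast this
  refine ⟨part1, part2, ?_⟩
  intro δ hδ
  -- the pair set as a finset
  set S : Finset (F × F) :=
    Finset.univ.filter (fun p : F × F => p.1 ∈ A ∧ p.2 ∈ A ∧ p.1 - p.2 = δ) with hSdef
  have hSset : {p : F × F | p.1 ∈ nonzeroSquares F ∧ p.2 ∈ nonzeroSquares F ∧ p.1 - p.2 = δ}
      = ↑S := by
    ext p
    simp [hSdef, hAset]
  set X : Finset F := Finset.univ.filter (fun x : F => x + δ ∈ A ∧ x ∈ A) with hXdef
  have hSX : S.card = X.card := by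
    apply Finset.card_bij' (i := fun p _ => p.2) (j := fun x _ => (x + δ, x))
    · intro p hp
      simp only [hSdef, Finset.mem_filter, Finset.mem_univ, true_and] at hp
      obtain ⟨h1, h2, h3⟩ := hp
      have : p.2 + δ = p.1 := by linear_combination -h3
      simp only [hXdef, Finset.mem_filter, Finset.mem_univ, true_and]
      exact ⟨this ▸ h1, h2⟩
    · intro x hx
      simp only [hXdef, Finset.mem_filter, Finset.mem_univ, true_and] at hx
      simp only [hSdef, Finset.mem_filter, Finset.mem_univ, true_and]
      exact ⟨hx.1, hx.2, by ring⟩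
    · intro p hp
      simp only [hSdef, Finset.mem_filter, Finset.mem_univ, true_and] at hp
      have : p.2 + δ = p.1 := by linear_combination -hp.2.2
      exact Prod.ext this rfl
    · intro x hx; rfl
  -- evaluate the character sum two ways
  have hshift : ∑ x : F, χ (x + δ) = 0 := by
    exact (Fintype.sum_equiv (Equiv.addRight δ) (fun x => (χ (x + δ) : ℤ))
      (fun x => (χ x : ℤ)) (fun x => rfl)).trans (quadraticChar_sum_zero hF2)
  have hkey : ∑ x : F, ((1 : ℤ) + χ (x + δ)) * (1 + χ x) = (q : ℤ) - 1 := by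
    have expand : ∀ x : F, ((1 : ℤ) + χ (x + δ)) * (1 + χ x)
        = 1 + ((χ (x + δ) : ℤ) + ((χ x : ℤ) + (χ x : ℤ) * (χ (x + δ) : ℤ))) := by
      intro x; ring
    rw [Finset.sum_congr rfl (fun x _ => expand x), Finset.sum_add_distrib,
      Finset.sum_add_distrib, Finset.sum_add_distrib, hshift,
      quadraticChar_sum_zero hF2, quadChar_sum_shift hF2 hδ]
    simp [hcard, sub_eq_add_neg]
  have hχnegδ : (χ (-δ) : ℤ) = - χ δ := by
    have h1 : χ (-1 : F) = -1 := quadraticChar_neg_one_iff_not_isSquare.mpr hns1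
    have : χ (-δ) = χ (-1) * χ δ := by rw [← map_mul]; ring_nf
    rw [this, h1]; ring
  have hptwise : ∀ x : F, ((1 : ℤ) + χ (x + δ)) * (1 + χ x)
      = (if x ∈ X then 4 else 0)
        + ((if x = 0 then 1 + (χ δ : ℤ) else 0) + (if x = -δ then 1 + (χ (-δ) : ℤ) else 0)) := by
    intro x
    by_cases hx0 : x = 0
    · have hδ' : (0 : F) ≠ -δ := by simpa using (neg_ne_zero.mpr hδ).symm
      simp [hx0, hXdef, hAdef, hδ', hχdef]
    · by_cases hxd : x = -δ
      · have hne : -δ ≠ (0 : F) := neg_ne_zero.mpr hδ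
        simp [hxd, hXdef, hAdef, hne, hχdef]
      · have hxd0 : x + δ ≠ 0 := fun h => hxd (by linear_combination h)
        by_cases h1 : IsSquare x <;> by_cases h2 : IsSquare (x + δ)
        · have v1 : χ x = 1 := (quadraticChar_one_iff_isSquare hx0).mpr h1
          have v2 : χ (x + δ) = 1 := (quadraticChar_one_iff_isSquare hxd0).mpr h2
          simp [hx0, hxd, hxd0, h1, h2, hXdef, hAdef, v1, v2]
        · have v1 : χ x = 1 := (quadraticChar_one_iff_isSquare hx0).mpr h1
          have v2 : χ (x + δ) = -1 := quadraticChar_neg_one_iff_not_isSquare.mpr h2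
          simp [hx0, hxd, hxd0, h1, h2, hXdef, hAdef, v1, v2]
        · have v1 : χ x = -1 := quadraticChar_neg_one_iff_not_isSquare.mpr h1
          simp [hx0, hxd, hxd0, h1, hXdef, hAdef, v1]
        · have v1 : χ x = -1 := quadraticChar_neg_one_iff_not_isSquare.mpr h1
          simp [hx0, hxd, hxd0, h1, hXdef, hAdef, v1]
  have hX4 : (X.card : ℤ) * 4 = (q : ℤ) - 3 := by
    have h := hkey
    rw [Finset.sum_congr rfl (fun x _ => hptwise x), Finset.sum_add_distrib,
      Finset.sum_add_distrib, Finset.sum_ite_mem, Finset.univ_inter, Finset.sum_const,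
      Finset.sum_ite_eq' Finset.univ (0 : F) (fun _ => 1 + (χ δ : ℤ)),
      Finset.sum_ite_eq' Finset.univ (-δ : F) (fun _ => 1 + (χ (-δ) : ℤ))] at h
    simp only [Finset.mem_univ, if_true, nsmul_eq_mul] at h
    rw [hχnegδ] at h
    linarith
  rw [hSset, Set.ncard_coe_finset, hSX]
  have hq' : (q : ℤ) = 2 * (m : ℤ) + 1 := by exact_mod_cast congrArg Nat.cast hm
  omega
end

section
/- Let A, B be complementary difference sets of size m in an abelian group G of order 2m+1. Then the (4m+4)×(4m+4) matrix H = I + S, where S is defined as in the Blatt–Szekeres construction (S_{ij} = +1 iff γ_j − γ_i ∈ A on the first block, S_{i,2m+1+j} = +1 iff γ_j − γ_i ∈ B on the off-diagonal block, with the corresponding skew-symmetric completion and bordering rows/columns, and zero diagonal), is a skew Hadamard matrix of order 4(m+1). -/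
open Finset

section BSaux

set_option linter.unusedSectionVars false

variable {G : Type*} [AddCommGroup G] [Fintype G] [DecidableEq G]

noncomputable def sgn (X : Finset G) (x : G) : ℝ := if x ∈ X then 1 else -1

lemma sgn_pm (X : Finset G) (x : G) : sgn X x = 1 ∨ sgn X x = -1 := by
  unfold sgn; split <;> simp

lemma sum_sgn (X : Finset G) :
    ∑ x : G, sgn X x = 2 * X.card - Fintype.card G := by
  have h : ∀ x : G, sgn X x = 2 * (if x ∈ X then (1:ℝ) else 0) - 1 := by
    intro x; unfold sgn; split <;> norm_num
  rw [Finset.sum_congr rfl (fun x _ => h x), Finset.sum_sub_distrib, ← Finset.mul_sum,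
    Finset.sum_boole, Finset.sum_const, Finset.card_univ, Finset.filter_univ_mem,
    nsmul_eq_mul, mul_one]

lemma corr_card (X : Finset G) (δ : G) :
    ∑ x : G, sgn X (x + δ) * sgn X x
      = 4 * ((X ×ˢ X).filter (fun p => p.1 - p.2 = δ)).card - 4 * X.card + Fintype.card G := by
  have h : ∀ x : G, sgn X (x + δ) * sgn X x
      = 4 * (if x + δ ∈ X ∧ x ∈ X then (1:ℝ) else 0)
        - 2 * (if x + δ ∈ X then (1:ℝ) else 0) - 2 * (if x ∈ X then (1:ℝ) else 0) + 1 := by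
    intro x; unfold sgn
    by_cases h1 : x + δ ∈ X <;> by_cases h2 : x ∈ X <;> simp [h1, h2] <;> norm_num
  rw [Finset.sum_congr rfl (fun x _ => h x)]
  rw [Finset.sum_add_distrib, Finset.sum_sub_distrib, Finset.sum_sub_distrib,
    ← Finset.mul_sum, ← Finset.mul_sum, ← Finset.mul_sum, Finset.sum_boole,
    Finset.sum_boole, Finset.sum_boole, Finset.sum_const]
  have c1 : (Finset.univ.filter fun x : G => x + δ ∈ X ∧ x ∈ X).card
      = ((X ×ˢ X).filter (fun p => p.1 - p.2 = δ)).card := by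
    apply Finset.card_bij' (fun x _ => (x + δ, x)) (fun p _ => p.2)
    · intro x hx
      simp only [Finset.mem_filter, Finset.mem_univ, true_and] at hx
      simp [Finset.mem_filter, Finset.mem_product, hx.1, hx.2]
    · intro p hp
      simp only [Finset.mem_filter, Finset.mem_product] at hp
      have : p.1 = p.2 + δ := by
        have h2 := hp.2; rw [sub_eq_iff_eq_add] at h2; rw [h2]; abel
      simp [Finset.mem_filter, ← this, hp.1.1, hp.1.2]
    · intro x hx; rfl
    · intro p hp
      simp only [Finset.mem_filter, Finset.mem_product] at hp
      have : p.2 + δ = p.1 := by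
        have h2 := hp.2; rw [sub_eq_iff_eq_add] at h2; rw [h2]; abel
      exact Prod.ext this rfl
  have c2 : (Finset.univ.filter fun x : G => x + δ ∈ X).card = X.card := by
    apply Finset.card_bij' (fun x _ => x + δ) (fun y _ => y - δ)
    · intro x hx; simpa using (Finset.mem_filter.mp hx).2
    · intro y hy; simp [hy]
    · intro x hx; simp
    · intro y hy; simp
  have c3 : (Finset.univ.filter fun x : G => x ∈ X).card = X.card := by
    simp [Finset.filter_univ_mem]
  rw [c1, c2, c3, Finset.card_univ, nsmul_eq_mul, mul_one]
  ring

lemma key_corr (m : ℕ) (hG : Fintype.card G = 2 * m + 1) (A B : Finset G)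
    (hA : A.card = m) (hB : B.card = m)
    (hcount : ∀ δ : G, δ ≠ 0 →
      ((A ×ˢ A).filter (fun p => p.1 - p.2 = δ)).card +
      ((B ×ˢ B).filter (fun p => p.1 - p.2 = δ)).card = m - 1)
    (δ : G) (hδ : δ ≠ 0) :
    (∑ x : G, sgn A (x + δ) * sgn A x) + (∑ x : G, sgn B (x + δ) * sgn B x) = -2 := by
  have hm : 1 ≤ m := by
    by_contra h
    have hm0 : m = 0 := by omega
    have h1 : Fintype.card G = 1 := by rw [hG, hm0]
    have := Fintype.card_le_one_iff.mp (le_of_eq h1)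
    exact hδ (this δ 0)
  have hc := hcount δ hδ
  have hcast : (((A ×ˢ A).filter (fun p => p.1 - p.2 = δ)).card : ℝ)
      + (((B ×ˢ B).filter (fun p => p.1 - p.2 = δ)).card : ℝ) = (m : ℝ) - 1 := by
    have := congrArg (Nat.cast : ℕ → ℝ) hc
    push_cast [Nat.cast_sub hm] at this
    linarith
  rw [corr_card, corr_card, hA, hB, hG]
  push_cast
  linarith

lemma neg_mem_of_not_mem (m : ℕ) (hG : Fintype.card G = 2 * m + 1) (A : Finset G)
    (hA : A.card = m) (hskew : ∀ a ∈ A, -a ∉ A) {δ : G} (hδ : δ ≠ 0) (h : δ ∉ A) :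
    -δ ∈ A := by
  classical
  set N := A.image (fun x => -x) with hN
  have hcardN : N.card = m := by
    rw [hN, Finset.card_image_of_injective _ neg_injective, hA]
  have h0A : (0 : G) ∉ A := fun h0 => hskew 0 h0 (by simpa using h0)
  have hdisj : Disjoint A N := by
    rw [Finset.disjoint_left]
    intro x hx hxN
    rw [hN, Finset.mem_image] at hxN
    obtain ⟨a, ha, rfl⟩ := hxN
    exact hskew a ha hx
  have hsub : A ∪ N ⊆ Finset.univ.erase 0 := by
    intro x hx
    rw [Finset.mem_union] at hx
    rw [Finset.mem_erase]
    refine ⟨?_, Finset.mem_univ x⟩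
    rcases hx with hx | hx
    · rintro rfl; exact h0A hx
    · rintro rfl
      rw [hN, Finset.mem_image] at hx
      obtain ⟨a, ha, ha0⟩ := hx
      have : a = 0 := by
        have := congrArg Neg.neg ha0; simpa using this
      exact h0A (this ▸ ha)
  have hcards : (Finset.univ.erase (0:G)).card ≤ (A ∪ N).card := by
    rw [Finset.card_union_of_disjoint hdisj, hA, hcardN,
      Finset.card_erase_of_mem (Finset.mem_univ 0), Finset.card_univ, hG]
    omega
  have heq : A ∪ N = Finset.univ.erase 0 := Finset.eq_of_subset_of_card_le hsub hcards
  have hδmem : δ ∈ A ∪ N := by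
    rw [heq, Finset.mem_erase]; exact ⟨hδ, Finset.mem_univ δ⟩
  rw [Finset.mem_union] at hδmem
  rcases hδmem with hx | hx
  · exact absurd hx h
  · rw [hN, Finset.mem_image] at hx
    obtain ⟨a, ha, rfl⟩ := hx
    simpa using ha

lemma sgn_neg_eq (m : ℕ) (hG : Fintype.card G = 2 * m + 1) (A : Finset G)
    (hA : A.card = m) (hskew : ∀ a ∈ A, -a ∉ A) (x : G) :
    sgn A (-x) = -sgn A x - (if x = 0 then 2 else 0) := by
  have h0A : (0 : G) ∉ A := fun h0 => hskew 0 h0 (by simpa using h0)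
  by_cases hx : x = 0
  · subst hx; simp [sgn, h0A]; norm_num
  · by_cases hxA : x ∈ A
    · simp [sgn, hskew x hxA, hxA, hx]
    · have := neg_mem_of_not_mem m hG A hA hskew hx hxA
      simp [sgn, this, hxA, hx]

lemma sum_sgn_sub_right (X : Finset G) (g : G) :
    ∑ k : G, sgn X (k - g) = ∑ x : G, sgn X x :=
  Fintype.sum_equiv (Equiv.subRight g) _ _ (fun _ => rfl)

lemma sum_sgn_sub_left (X : Finset G) (g : G) :
    ∑ k : G, sgn X (g - k) = ∑ x : G, sgn X x :=
  Fintype.sum_equiv (Equiv.subLeft g) _ _ (fun _ => rfl)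

lemma corr_reindex_rr (X : Finset G) (g h : G) :
    ∑ k : G, sgn X (k - g) * sgn X (k - h) = ∑ x : G, sgn X (x + (h - g)) * sgn X x := by
  apply Fintype.sum_equiv (Equiv.subRight h)
  intro k
  simp only [Equiv.subRight_apply]
  rw [show k - h + (h - g) = k - g by abel]

lemma corr_reindex_ll (X : Finset G) (g h : G) :
    ∑ k : G, sgn X (g - k) * sgn X (h - k) = ∑ x : G, sgn X (x + (h - g)) * sgn X x := by
  apply Fintype.sum_equiv (Equiv.subLeft g)
  intro k
  simp only [Equiv.subLeft_apply]
  rw [show g - k + (h - g) = h - k by abel, mul_comm]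

lemma mixed_reindex (A B : Finset G) (g h : G) :
    ∑ k : G, sgn B (k - g) * sgn A (k - h) = ∑ k : G, sgn A (g - k) * sgn B (h - k) := by
  apply Fintype.sum_equiv (Equiv.subLeft (g + h))
  intro k
  simp only [Equiv.subLeft_apply]
  rw [show g - (g + h - k) = k - h by abel, show h - (g + h - k) = k - g by abel, mul_comm]

end BSaux

/-- The skew-symmetric core `S` of the Blatt–Szekeres construction, indexed by
`(G ⊕ G) ⊕ Fin 2`: the two copies of `G` are rows/columns `1,…,2m+1` and
`2m+2,…,4m+2`, while `Fin 2` indexes the two bordering rows/columns `4m+3` and `4m+4`. -/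
def blattSzekeresS (G : Type*) [AddCommGroup G] [DecidableEq G] (A B : Finset G) :
    Matrix ((G ⊕ G) ⊕ Fin 2) ((G ⊕ G) ⊕ Fin 2) ℝ :=
  Matrix.of fun i j =>
    match i, j with
    | .inl (.inl g), .inl (.inl h) => if g = h then 0 else if h - g ∈ A then 1 else -1
    | .inl (.inr g), .inl (.inr h) => if g = h then 0 else if h - g ∈ A then -1 else 1
    | .inl (.inl g), .inl (.inr h) => if h - g ∈ B then 1 else -1
    | .inl (.inr g), .inl (.inl h) => -(if g - h ∈ B then 1 else -1)
    | .inl (.inl _), .inr k => if k = 0 then 1 else -1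
    | .inl (.inr _), .inr _ => -1
    | .inr k, .inl (.inl _) => if k = 0 then -1 else 1
    | .inr _, .inl (.inr _) => 1
    | .inr k, .inr l => if k = l then 0 else if k = 0 then -1 else 1

section BSentries

set_option linter.unusedSectionVars false

variable {G : Type*} [AddCommGroup G] [Fintype G] [DecidableEq G] (A B : Finset G)

lemma e11 (h0A : (0:G) ∉ A) (g k : G) :
    (1 + blattSzekeresS G A B) (.inl (.inl g)) (.inl (.inl k))
      = sgn A (k - g) + (if k = g then 2 else 0) := by
  by_cases h : g = k
  · subst h
    simp [blattSzekeresS, Matrix.add_apply, Matrix.one_apply, sgn, sub_self, h0A]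
    norm_num
  · simp [blattSzekeresS, Matrix.add_apply, Matrix.one_apply, h, Ne.symm h, sgn]

lemma e22 (h0A : (0:G) ∉ A) (g k : G) :
    (1 + blattSzekeresS G A B) (.inl (.inr g)) (.inl (.inr k)) = -sgn A (k - g) := by
  by_cases h : g = k
  · subst h
    simp [blattSzekeresS, Matrix.add_apply, Matrix.one_apply, sgn, sub_self, h0A]
  · simp only [blattSzekeresS, Matrix.add_apply, Matrix.one_apply, Matrix.of_apply, sgn]
    simp [h, Ne.symm h]
    split <;> norm_num

lemma e12 (g k : G) :
    (1 + blattSzekeresS G A B) (.inl (.inl g)) (.inl (.inr k)) = sgn B (k - g) := by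
  simp [blattSzekeresS, Matrix.add_apply, Matrix.one_apply, sgn]

lemma e21 (g k : G) :
    (1 + blattSzekeresS G A B) (.inl (.inr g)) (.inl (.inl k)) = -sgn B (g - k) := by
  simp [blattSzekeresS, Matrix.add_apply, Matrix.one_apply, sgn]

lemma e1r (g : G) (k : Fin 2) :
    (1 + blattSzekeresS G A B) (.inl (.inl g)) (.inr k) = if k = 0 then 1 else -1 := by
  simp [blattSzekeresS, Matrix.add_apply, Matrix.one_apply]

lemma e2r (g : G) (k : Fin 2) :
    (1 + blattSzekeresS G A B) (.inl (.inr g)) (.inr k) = -1 := by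
  simp [blattSzekeresS, Matrix.add_apply, Matrix.one_apply]

lemma er1 (k : Fin 2) (g : G) :
    (1 + blattSzekeresS G A B) (.inr k) (.inl (.inl g)) = if k = 0 then -1 else 1 := by
  simp [blattSzekeresS, Matrix.add_apply, Matrix.one_apply]

lemma er2 (k : Fin 2) (g : G) :
    (1 + blattSzekeresS G A B) (.inr k) (.inl (.inr g)) = 1 := by
  simp [blattSzekeresS, Matrix.add_apply, Matrix.one_apply]

lemma err (k l : Fin 2) :
    (1 + blattSzekeresS G A B) (.inr k) (.inr l)
      = if k = l then 1 else if k = 0 then -1 else 1 := by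
  by_cases h : k = l
  · subst h; simp [blattSzekeresS, Matrix.add_apply, Matrix.one_apply]
  · simp [blattSzekeresS, Matrix.add_apply, Matrix.one_apply, h]

end BSentries

theorem blatt_szekeres_skew_hadamard (G : Type*) [AddCommGroup G] [Fintype G] [DecidableEq G]
    (m : ℕ) (hG : Fintype.card G = 2 * m + 1) (A B : Finset G)
    (hA : A.card = m) (hB : B.card = m)
    (hskew : ∀ a ∈ A, -a ∉ A)
    (hcount : ∀ δ : G, δ ≠ 0 →
      ((A ×ˢ A).filter (fun p => p.1 - p.2 = δ)).card +
      ((B ×ˢ B).filter (fun p => p.1 - p.2 = δ)).card = m - 1) :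
    (∀ i j, (1 + blattSzekeresS G A B) i j = 1 ∨ (1 + blattSzekeresS G A B) i j = -1) ∧
    (1 + blattSzekeresS G A B) * (1 + blattSzekeresS G A B).transpose =
      ((4 * (m + 1) : ℕ) : ℝ) • (1 : Matrix ((G ⊕ G) ⊕ Fin 2) ((G ⊕ G) ⊕ Fin 2) ℝ) ∧
    (1 + blattSzekeresS G A B) + (1 + blattSzekeresS G A B).transpose =
      (2 : ℝ) • (1 : Matrix ((G ⊕ G) ⊕ Fin 2) ((G ⊕ G) ⊕ Fin 2) ℝ) := by
  classical
  have h0A : (0:G) ∉ A := fun h0 => hskew 0 h0 (by simpa using h0)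
  have hneg : ∀ x : G, sgn A (-x) = -sgn A x - (if x = 0 then 2 else 0) :=
    sgn_neg_eq m hG A hA hskew
  have hkey : ∀ δ : G, δ ≠ 0 →
      (∑ x : G, sgn A (x + δ) * sgn A x) + (∑ x : G, sgn B (x + δ) * sgn B x) = -2 :=
    key_corr m hG A B hA hB hcount
  have hsA : ∑ x : G, sgn A x = -1 := by rw [sum_sgn, hA, hG]; push_cast; ring
  have hsB : ∑ x : G, sgn B x = -1 := by rw [sum_sgn, hB, hG]; push_cast; ring
  set H := 1 + blattSzekeresS G A B with hHdef
  have E11 : ∀ g k : G, H (.inl (.inl g)) (.inl (.inl k))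
      = sgn A (k - g) + (if k = g then 2 else 0) := fun g k => e11 A B h0A g k
  have E22 : ∀ g k : G, H (.inl (.inr g)) (.inl (.inr k)) = -sgn A (k - g) :=
    fun g k => e22 A B h0A g k
  have E12 : ∀ g k : G, H (.inl (.inl g)) (.inl (.inr k)) = sgn B (k - g) :=
    fun g k => e12 A B g k
  have E21 : ∀ g k : G, H (.inl (.inr g)) (.inl (.inl k)) = -sgn B (g - k) :=
    fun g k => e21 A B g k
  have E1r : ∀ (g : G) (k : Fin 2), H (.inl (.inl g)) (.inr k) = if k = 0 then 1 else -1 :=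
    fun g k => e1r A B g k
  have E2r : ∀ (g : G) (k : Fin 2), H (.inl (.inr g)) (.inr k) = -1 :=
    fun g k => e2r A B g k
  have Er1 : ∀ (k : Fin 2) (g : G), H (.inr k) (.inl (.inl g)) = if k = 0 then -1 else 1 :=
    fun k g => er1 A B k g
  have Er2 : ∀ (k : Fin 2) (g : G), H (.inr k) (.inl (.inr g)) = 1 :=
    fun k g => er2 A B k g
  have Err : ∀ k l : Fin 2, H (.inr k) (.inr l) = if k = l then 1 else if k = 0 then -1 else 1 :=
    fun k l => err A B k l
  -- Part 1: entries are ±1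
  have hpm : ∀ i j, H i j = 1 ∨ H i j = -1 := by
    rintro ((g | g) | k) ((h | h) | l)
    · rw [E11]
      by_cases hgh : h = g
      · subst hgh; left; simp [sgn, sub_self, h0A]; norm_num
      · rcases sgn_pm A (h - g) with h1 | h1 <;> simp [hgh, h1]
    · rw [E12]; exact sgn_pm B _
    · rw [E1r]; split_ifs <;> norm_num
    · rw [E21]; rcases sgn_pm B (g - h) with h1 | h1 <;> simp [h1]
    · rw [E22]; rcases sgn_pm A (h - g) with h1 | h1 <;> simp [h1]
    · rw [E2r]; norm_num
    · rw [Er1]; split_ifs <;> norm_num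
    · rw [Er2]; norm_num
    · rw [Err]; split_ifs <;> norm_num
  refine ⟨hpm, ?_, ?_⟩
  · -- Part 2: H * Hᵀ = n • 1
    have hcomm : ∀ i j, (∑ k, H i k * H j k) = ∑ k, H j k * H i k :=
      fun i j => Finset.sum_congr rfl (fun k _ => mul_comm _ _)
    have hshA : ∀ g : G, ∑ k : G, sgn A (k - g) = -1 :=
      fun g => (sum_sgn_sub_right A g).trans hsA
    have hshB : ∀ g : G, ∑ k : G, sgn B (k - g) = -1 :=
      fun g => (sum_sgn_sub_right B g).trans hsB
    have hshB' : ∀ g : G, ∑ k : G, sgn B (g - k) = -1 :=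
      fun g => (sum_sgn_sub_left B g).trans hsB
    -- orthogonality of the various pairs of rows
    have o11 : ∀ g h : G, g ≠ h →
        (∑ k, H (.inl (.inl g)) k * H (.inl (.inl h)) k) = 0 := by
      intro g h hgh
      rw [Fintype.sum_sum_type, Fintype.sum_sum_type, Fin.sum_univ_two]
      simp only [E11, E12, E1r]
      have hT1 : ∑ k : G, (sgn A (k - g) + (if k = g then (2:ℝ) else 0)) *
          (sgn A (k - h) + (if k = h then 2 else 0))
          = (∑ x : G, sgn A (x + (h - g)) * sgn A x) + 2 * sgn A (g - h) + 2 * sgn A (h - g) := by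
        have hpt : ∀ k : G, (sgn A (k - g) + (if k = g then (2:ℝ) else 0)) *
            (sgn A (k - h) + (if k = h then 2 else 0))
            = sgn A (k - g) * sgn A (k - h)
              + (if k = g then 2 * sgn A (k - h) else 0)
              + (if k = h then 2 * sgn A (k - g) else 0) := by
          intro k
          by_cases h1 : k = g <;> by_cases h2 : k = h
          · exact absurd (h1.symm.trans h2) hgh
          all_goals (simp [h1, h2, hgh, Ne.symm hgh]; try ring)
        rw [Finset.sum_congr rfl (fun k _ => hpt k), Finset.sum_add_distrib,
          Finset.sum_add_distrib, corr_reindex_rr, Finset.sum_ite_eq' Finset.univ g,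
          Finset.sum_ite_eq' Finset.univ h]
        simp
        try ring
      rw [hT1, corr_reindex_rr B g h]
      have hk := hkey (h - g) (sub_ne_zero.mpr (Ne.symm hgh))
      have hng : sgn A (g - h) + sgn A (h - g) = 0 := by
        have := hneg (h - g)
        rw [neg_sub, if_neg (sub_ne_zero.mpr (Ne.symm hgh))] at this
        linarith
      norm_num
      linarith
    have o22 : ∀ g h : G, g ≠ h →
        (∑ k, H (.inl (.inr g)) k * H (.inl (.inr h)) k) = 0 := by
      intro g h hgh
      rw [Fintype.sum_sum_type, Fintype.sum_sum_type, Fin.sum_univ_two]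
      simp only [E21, E22, E2r]
      have hT1 : ∑ k : G, (-sgn B (g - k)) * (-sgn B (h - k))
          = ∑ x : G, sgn B (x + (h - g)) * sgn B x := by
        rw [← corr_reindex_ll B g h]
        exact Finset.sum_congr rfl (fun k _ => by ring)
      have hT2 : ∑ k : G, (-sgn A (k - g)) * (-sgn A (k - h))
          = ∑ x : G, sgn A (x + (h - g)) * sgn A x := by
        rw [← corr_reindex_rr A g h]
        exact Finset.sum_congr rfl (fun k _ => by ring)
      rw [hT1, hT2]
      have hk := hkey (h - g) (sub_ne_zero.mpr (Ne.symm hgh))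
      norm_num
      linarith
    have o12 : ∀ g h : G,
        (∑ k, H (.inl (.inl g)) k * H (.inl (.inr h)) k) = 0 := by
      intro g h
      rw [Fintype.sum_sum_type, Fintype.sum_sum_type, Fin.sum_univ_two]
      simp only [E11, E12, E21, E22, E1r, E2r]
      have hT1 : ∑ k : G, (sgn A (k - g) + (if k = g then (2:ℝ) else 0)) * (-sgn B (h - k))
          = -(∑ k : G, sgn A (k - g) * sgn B (h - k)) - 2 * sgn B (h - g) := by
        have hpt : ∀ k : G, (sgn A (k - g) + (if k = g then (2:ℝ) else 0)) * (-sgn B (h - k))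
            = -(sgn A (k - g) * sgn B (h - k)) + (if k = g then -(2 * sgn B (h - k)) else 0) := by
          intro k; by_cases h1 : k = g <;> simp [h1] <;> ring
        rw [Finset.sum_congr rfl (fun k _ => hpt k), Finset.sum_add_distrib,
          Finset.sum_neg_distrib, Finset.sum_ite_eq' Finset.univ g]
        simp
        ring
      have hT2 : ∑ k : G, sgn B (k - g) * (-sgn A (k - h))
          = -(∑ k : G, sgn B (k - g) * sgn A (k - h)) := by
        rw [← Finset.sum_neg_distrib]
        exact Finset.sum_congr rfl (fun k _ => by ring)
      have hPQ : (∑ k : G, sgn A (k - g) * sgn B (h - k))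
          + (∑ k : G, sgn B (k - g) * sgn A (k - h)) = -2 * sgn B (h - g) := by
        rw [mixed_reindex A B g h, ← Finset.sum_add_distrib]
        have hpt : ∀ k : G, sgn A (k - g) * sgn B (h - k) + sgn A (g - k) * sgn B (h - k)
            = if k = g then -2 * sgn B (h - k) else 0 := by
          intro k
          have hx := hneg (k - g)
          rw [neg_sub] at hx
          by_cases h1 : k = g
          · subst h1
            have h00 : sgn A (0:G) = -1 := by simp [sgn, h0A]
            simp only [sub_self, h00, eq_self_iff_true, if_true]
            ring
          · rw [hx, if_neg (sub_ne_zero.mpr h1), if_neg h1]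
            ring
        rw [Finset.sum_congr rfl (fun k _ => hpt k), Finset.sum_ite_eq' Finset.univ g]
        simp
      rw [hT1, hT2]
      norm_num
      linarith
    have o1r : ∀ (g : G) (r : Fin 2),
        (∑ k, H (.inl (.inl g)) k * H (.inr r) k) = 0 := by
      intro g r
      rw [Fintype.sum_sum_type, Fintype.sum_sum_type, Fin.sum_univ_two]
      simp only [E11, E12, E1r, Er1, Er2, Err]
      have hT1 : ∑ k : G, (sgn A (k - g) + (if k = g then (2:ℝ) else 0)) = 1 := by
        rw [Finset.sum_add_distrib, hshA g, Finset.sum_ite_eq' Finset.univ g]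
        simp
        norm_num
      rw [← Finset.sum_mul, hT1]
      have hT2 : ∑ k : G, sgn B (k - g) * 1 = -1 := by
        simp [hshB g]
      rw [hT2]
      fin_cases r <;> norm_num
    have o2r : ∀ (g : G) (r : Fin 2),
        (∑ k, H (.inl (.inr g)) k * H (.inr r) k) = 0 := by
      intro g r
      rw [Fintype.sum_sum_type, Fintype.sum_sum_type, Fin.sum_univ_two]
      simp only [E21, E22, E2r, Er1, Er2, Err]
      have hT1 : ∑ k : G, (-sgn B (g - k)) = 1 := by
        rw [Finset.sum_neg_distrib, hshB' g]; norm_num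
      rw [← Finset.sum_mul, hT1]
      have hT2 : ∑ k : G, (-sgn A (k - g)) * 1 = 1 := by
        simp [Finset.sum_neg_distrib, hshA g]
      rw [hT2]
      fin_cases r <;> norm_num
    have orr01 : (∑ k, H (.inr 0) k * H (.inr 1) k) = 0 := by
      rw [Fintype.sum_sum_type, Fintype.sum_sum_type, Fin.sum_univ_two]
      simp only [E1r, E2r, Er1, Er2, Err]
      norm_num
    have horth : ∀ i j, i ≠ j → (∑ k, H i k * H j k) = 0 := by
      rintro ((g | g) | k) ((h | h) | l) hij
      · exact o11 g h (by simpa using hij)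
      · exact o12 g h
      · exact o1r g l
      · rw [hcomm]; exact o12 h g
      · exact o22 g h (by simpa using hij)
      · exact o2r g l
      · rw [hcomm]; exact o1r h k
      · rw [hcomm]; exact o2r h k
      · have hkl : k ≠ l := by simpa using hij
        fin_cases k <;> fin_cases l
        · exact absurd rfl hkl
        · exact orr01
        · rw [hcomm]; exact orr01
        · exact absurd rfl hkl
    have hcard : Fintype.card ((G ⊕ G) ⊕ Fin 2) = 4 * m + 4 := by
      simp [Fintype.card_sum, hG]
      omega
    ext i j
    rw [Matrix.mul_apply]
    simp only [Matrix.transpose_apply, Matrix.smul_apply, Matrix.one_apply, smul_eq_mul]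
    by_cases hij : i = j
    · subst hij
      rw [if_pos rfl, mul_one]
      have hsq : ∀ k, H i k * H i k = 1 := by
        intro k; rcases hpm i k with h1 | h1 <;> rw [h1] <;> norm_num
      rw [Finset.sum_congr rfl (fun k _ => hsq k), Finset.sum_const, Finset.card_univ, hcard,
        nsmul_eq_mul, mul_one]
      push_cast
      ring
    · rw [if_neg hij, mul_zero]
      exact horth i j hij
  · -- Part 3: H + Hᵀ = 2 • 1
    ext i j
    simp only [Matrix.add_apply, Matrix.transpose_apply, Matrix.smul_apply, Matrix.one_apply,
      smul_eq_mul]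
    rcases i with (g | g) | k <;> rcases j with (h | h) | l
    · rw [E11, E11]
      by_cases hgh : g = h
      · subst hgh
        simp [sub_self, sgn, h0A]
        norm_num
      · have hx := hneg (h - g)
        rw [neg_sub, if_neg (sub_ne_zero.mpr (Ne.symm hgh))] at hx
        rw [if_neg (Ne.symm hgh), if_neg hgh,
          if_neg (show ¬(Sum.inl (Sum.inl g) : (G ⊕ G) ⊕ Fin 2) = Sum.inl (Sum.inl h)
            by simp [hgh])]
        linarith
    · rw [E12, E21]
      simp
    · rw [E1r, Er1]
      split_ifs <;> simp_all
    · rw [E21, E12]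
      simp
    · rw [E22, E22]
      by_cases hgh : g = h
      · subst hgh
        simp [sub_self, sgn, h0A]
        norm_num
      · have hx := hneg (h - g)
        rw [neg_sub, if_neg (sub_ne_zero.mpr (Ne.symm hgh))] at hx
        rw [if_neg (show ¬(Sum.inl (Sum.inr g) : (G ⊕ G) ⊕ Fin 2) = Sum.inl (Sum.inr h)
          by simp [hgh])]
        linarith
    · rw [E2r, Er2]
      simp
    · rw [Er1, E1r]
      split_ifs <;> simp_all
    · rw [Er2, E2r]
      simp
    · rw [Err, Err]
      by_cases hkl : k = l
      · subst hkl
        simp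
        norm_num
      · rw [if_neg hkl, if_neg (Ne.symm hkl),
          if_neg (show ¬(Sum.inr k : (G ⊕ G) ⊕ Fin 2) = Sum.inr l by simp [hkl])]
        fin_cases k <;> fin_cases l <;> simp_all <;> norm_num
end

section
/- Two amicable Hadamard matrices W = I + S (skew) and M (symmetric) of order n with W Mᵀ = M Wᵀ yield amicable orthogonal designs of type ((1, n−1); (n)): namely A = xI + yS and B = zM satisfy A Aᵀ = (x² + (n−1)y²)I, B Bᵀ = n z² I, and A Bᵀ = B Aᵀ. -/
theorem amicable_orthogonal_designs_from_amicable_hadamard (n : ℕ)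
    (S M : Matrix (Fin n) (Fin n) ℝ)
    (hSskew : S.transpose = -S)
    (hWpm : ∀ i j, (1 + S) i j = 1 ∨ (1 + S) i j = -1)
    (hW : (1 + S) * (1 + S).transpose = (n : ℝ) • (1 : Matrix (Fin n) (Fin n) ℝ))
    (hMsym : M.transpose = M)
    (hMpm : ∀ i j, M i j = 1 ∨ M i j = -1)
    (hM : M * M.transpose = (n : ℝ) • (1 : Matrix (Fin n) (Fin n) ℝ))
    (hamic : (1 + S) * M.transpose = M * (1 + S).transpose)
    (x y z : ℝ) :
    (x • (1 : Matrix (Fin n) (Fin n) ℝ) + y • S) *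
        (x • (1 : Matrix (Fin n) (Fin n) ℝ) + y • S).transpose =
      (x ^ 2 + ((n : ℝ) - 1) * y ^ 2) • (1 : Matrix (Fin n) (Fin n) ℝ) ∧
    (z • M) * (z • M).transpose = ((n : ℝ) * z ^ 2) • (1 : Matrix (Fin n) (Fin n) ℝ) ∧
    (x • (1 : Matrix (Fin n) (Fin n) ℝ) + y • S) * (z • M).transpose =
      (z • M) * (x • (1 : Matrix (Fin n) (Fin n) ℝ) + y • S).transpose := by
  simp only [Matrix.transpose_add, Matrix.transpose_one, hSskew, hMsym] at hW hamic hM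
  have hSS : S * S = (1 - (n : ℝ)) • (1 : Matrix (Fin n) (Fin n) ℝ) := by
    have h : (1 : Matrix (Fin n) (Fin n) ℝ) - S * S = (n : ℝ) • 1 := by
      calc (1 : Matrix (Fin n) (Fin n) ℝ) - S * S = (1 + S) * (1 + -S) := by
            noncomm_ring
        _ = (n : ℝ) • 1 := hW
    have := sub_eq_iff_eq_add.mp h
    rw [sub_smul, one_smul] at *
    linear_combination (norm := noncomm_ring) -h
  have hSM : S * M = -(M * S) := by
    have h : M + S * M = M + -(M * S) := by
      calc M + S * M = (1 + S) * M := by noncomm_ring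
        _ = M * (1 + -S) := hamic
        _ = M + -(M * S) := by noncomm_ring
    exact add_left_cancel h
  refine ⟨?_, ?_, ?_⟩
  · rw [Matrix.transpose_add, Matrix.transpose_smul, Matrix.transpose_smul,
      Matrix.transpose_one, hSskew]
    have : (x • (1 : Matrix (Fin n) (Fin n) ℝ) + y • S) * (x • 1 + y • (-S))
        = (x^2) • 1 - (y^2) • (S * S) := by
      simp [mul_add, add_mul, smul_smul, mul_comm]
      module
    rw [this, hSS]
    rw [smul_smul, add_smul, ← sub_smul, ← add_smul]
    congr 1
    ring
  · rw [Matrix.transpose_smul, hMsym, smul_mul_assoc, Matrix.mul_smul, hM,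
      smul_smul, smul_smul]
    ring_nf
  · rw [Matrix.transpose_add, Matrix.transpose_smul, Matrix.transpose_smul,
      Matrix.transpose_one, Matrix.transpose_smul, hSskew, hMsym]
    simp only [mul_add, add_mul, smul_mul_assoc, Matrix.mul_smul, one_mul, mul_one,
      smul_neg, Matrix.mul_neg, hSM]
    module
end
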